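/- arXiv:1406.4425 — 6 statements merged into one kernel-verified Lean document; each statement's English description precedes it below -/
import Mathlib

section
/- Let u = (u|u') and v = (v|v') in Z_2^α × Z_4^β, with associated polynomials and m = lcm(α,β). Then u is orthogonal (under the standard Z_4-valued inner product) to v and to all cyclic shifts v^{(i)} of v if and only if u(x) ∘ v(x) = 0 in Z_4[x]/(x^m - 1), where u(x)∘v(x) = 2u(x)θ_{m/α}(x^α)x^{m-1-deg v(x)}v*(x) + u'(x)θ_{m/β}(x^β)x^{m-1-deg v'(x)}v'*(x) mod (x^m - 1). -/
open Polynomial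

/-- The standard inner product on `Z₂^α × Z₄^β` with values in `Z₄`. -/
def innerZ2Z4 {α β : ℕ} (u v : (Fin α → ZMod 2) × (Fin β → ZMod 4)) : ZMod 4 :=
  2 * ∑ i, (((u.1 i).val : ZMod 4) * ((v.1 i).val : ZMod 4)) + ∑ j, u.2 j * v.2 j

/-- The `i`-th simultaneous cyclic shift `v^{(i)}`, with subscripts read
modulo `α` and `β` respectively. -/
def cshiftIter {α β : ℕ} [NeZero α] [NeZero β] (i : ℕ)
    (v : (Fin α → ZMod 2) × (Fin β → ZMod 4)) :
    (Fin α → ZMod 2) × (Fin β → ZMod 4) :=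
  (fun j => v.1 (j + Fin.ofNat α i), fun j => v.2 (j + Fin.ofNat β i))

/-- The polynomial `∑ uᵢ xⁱ` associated to a vector. -/
noncomputable def polyOf2 {α : ℕ} (u : Fin α → ZMod 2) : Polynomial (ZMod 2) :=
  ∑ i, C (u i) * X ^ (i : ℕ)

/-- The polynomial `∑ u'ⱼ xʲ` associated to a quaternary vector. -/
noncomputable def polyOf4 {β : ℕ} (u : Fin β → ZMod 4) : Polynomial (ZMod 4) :=
  ∑ j, C (u j) * X ^ (j : ℕ)

/-- Coefficientwise lift of a binary polynomial to `Z₄[x]`, with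
coefficients in `{0,1} ⊆ Z₄`. -/
noncomputable def lift24 (p : Polynomial (ZMod 2)) : Polynomial (ZMod 4) :=
  ∑ i ∈ p.support, C (((p.coeff i).val : ℕ) : ZMod 4) * X ^ i

/-- `θ_k(x^n) = ∑_{i=0}^{k-1} x^{ni}` in `Z₄[x]`. -/
noncomputable def thetaPow (k n : ℕ) : Polynomial (ZMod 4) :=
  ∑ i ∈ Finset.range k, X ^ (n * i)

/-- The bilinear map `∘` of the paper, as a polynomial of `Z₄[x]`
(to be reduced modulo `x^m - 1`, `m = lcm(α,β)`):
`u∘v = 2u(x)θ_{m/α}(x^α)x^{m-1-deg v}v*(x) + u'(x)θ_{m/β}(x^β)x^{m-1-deg v'}v'*(x)`. -/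
noncomputable def circ (α β : ℕ) (u v : Polynomial (ZMod 2)) (u' v' : Polynomial (ZMod 4)) :
    Polynomial (ZMod 4) :=
  2 * lift24 u * thetaPow (Nat.lcm α β / α) α *
      X ^ (Nat.lcm α β - 1 - v.natDegree) * lift24 v.reverse
    + u' * thetaPow (Nat.lcm α β / β) β *
      X ^ (Nat.lcm α β - 1 - v'.natDegree) * v'.reverse

open Finset

open Fin.NatCast

open Fin.CommRing


/-- The `c`-th folded-coefficient functional modulo `m`. -/
noncomputable def Tc (m c : ℕ) : Polynomial (ZMod 4) →+ ZMod 4 where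
  toFun p := p.sum fun k a => if k % m = c % m then a else 0
  map_zero' := Polynomial.sum_zero_index _
  map_add' p q := Polynomial.sum_add_index p q
    (fun k a => if k % m = c % m then a else 0) (fun i => by simp)
    (fun a b₁ b₂ => by beta_reduce; split <;> simp)

lemma Tc_apply (m c : ℕ) (p : Polynomial (ZMod 4)) :
    Tc m c p = ∑ k ∈ p.support, if k % m = c % m then p.coeff k else 0 := by
  simp only [Tc, AddMonoidHom.coe_mk, ZeroHom.coe_mk, Polynomial.sum_def]

lemma Tc_monomial (m c k : ℕ) (a : ZMod 4) :
    Tc m c (C a * X ^ k) = if k % m = c % m then a else 0 := by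
  simp only [Tc, AddMonoidHom.coe_mk, ZeroHom.coe_mk, C_mul_X_pow_eq_monomial]
  rw [Polynomial.sum_monomial_index _ _ (by simp)]

lemma dvd_sub_fold (m : ℕ) (hm : 0 < m) (p : Polynomial (ZMod 4)) :
    (X ^ m - 1 : Polynomial (ZMod 4)) ∣ p - ∑ c ∈ range m, C (Tc m c p) * X ^ c := by
  have h1 : (∑ c ∈ range m, C (Tc m c p) * X ^ c)
      = ∑ k ∈ p.support, C (p.coeff k) * X ^ (k % m) := by
    calc (∑ c ∈ range m, C (Tc m c p) * X ^ c)
        = ∑ c ∈ range m, ∑ k ∈ p.support,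
            (if k % m = c % m then C (p.coeff k) * X ^ c else 0) := by
          refine Finset.sum_congr rfl fun c _ => ?_
          rw [Tc_apply, map_sum, Finset.sum_mul]
          exact Finset.sum_congr rfl fun k _ => by split <;> simp
      _ = ∑ k ∈ p.support, ∑ c ∈ range m,
            (if k % m = c % m then C (p.coeff k) * X ^ c else 0) := Finset.sum_comm
      _ = ∑ k ∈ p.support, C (p.coeff k) * X ^ (k % m) := by
          refine Finset.sum_congr rfl fun k _ => ?_
          have h2 : (∑ c ∈ range m, (if k % m = c % m then C (p.coeff k) * X ^ c else 0))
              = ∑ c ∈ range m, (if k % m = c then C (p.coeff k) * X ^ c else 0) :=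
            Finset.sum_congr rfl fun c hc => by rw [Nat.mod_eq_of_lt (mem_range.mp hc)]
          rw [h2, Finset.sum_ite_eq, if_pos (mem_range.mpr (Nat.mod_lt _ hm))]
  rw [h1]
  have h2 : p - ∑ k ∈ p.support, C (p.coeff k) * X ^ (k % m)
      = ∑ k ∈ p.support, C (p.coeff k) * (X ^ k - X ^ (k % m)) := by
    nth_rewrite 1 [p.as_sum_support]
    rw [← Finset.sum_sub_distrib]
    exact Finset.sum_congr rfl fun k _ => by rw [← C_mul_X_pow_eq_monomial]; ring
  rw [h2]
  refine Finset.dvd_sum fun k _ => Dvd.dvd.mul_left ?_ _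
  have h3 : (X : Polynomial (ZMod 4)) ^ k = X ^ (k % m) * (X ^ m) ^ (k / m) := by
    rw [← pow_mul, ← pow_add]
    congr 1
    exact (Nat.mod_add_div k m).symm
  rw [h3, show (X:Polynomial (ZMod 4)) ^ (k % m) * (X ^ m) ^ (k / m) - X ^ (k % m)
      = X ^ (k % m) * ((X ^ m) ^ (k / m) - 1) from by ring]
  exact Dvd.dvd.mul_left (by simpa using sub_dvd_pow_sub_pow ((X:Polynomial (ZMod 4)) ^ m) 1 (k / m)) _

lemma dvd_iff_Tc (m : ℕ) (hm : 0 < m) (p : Polynomial (ZMod 4)) :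
    ((X ^ m - 1 : Polynomial (ZMod 4)) ∣ p) ↔ ∀ c < m, Tc m c p = 0 := by
  have hfold := dvd_sub_fold m hm p
  set f : Polynomial (ZMod 4) := ∑ c ∈ range m, C (Tc m c p) * X ^ c with hf
  have hco : ∀ n < m, f.coeff n = Tc m n p := by
    intro n hn
    rw [hf, finset_sum_coeff]
    simp only [coeff_C_mul, coeff_X_pow, mul_ite, mul_one, mul_zero]
    rw [Finset.sum_ite_eq, if_pos (mem_range.mpr hn)]
  have hdeg : f.natDegree < m := by
    have : f.natDegree ≤ m - 1 := by
      apply Polynomial.natDegree_sum_le_of_forall_le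
      intro c hc
      exact le_trans (natDegree_C_mul_X_pow_le _ _) (by have := mem_range.mp hc; omega)
    omega
  haveI : Nontrivial (ZMod 4) := ⟨0, 1, by decide⟩
  have hmonic : (X ^ m - 1 : Polynomial (ZMod 4)).Monic := by
    simpa using monic_X_pow_sub_C (1 : ZMod 4) hm.ne'
  constructor
  · intro hp c hc
    have hdf : (X ^ m - 1 : Polynomial (ZMod 4)) ∣ f := by
      have : f = p - (p - f) := by ring
      rw [this]
      exact dvd_sub hp hfold
    have hf0 : f = 0 := by
      by_contra h0
      obtain ⟨s, hs⟩ := hdf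
      have hs0 : s ≠ 0 := fun h => h0 (by rw [hs, h, mul_zero])
      have : ((X:Polynomial (ZMod 4)) ^ m - 1).natDegree ≤ f.natDegree := by
        rw [hs, Polynomial.Monic.natDegree_mul' hmonic (by simpa using hs0)]
        omega
      rw [show ((X:Polynomial (ZMod 4)) ^ m - 1) = X ^ m - C 1 from by rw [map_one],
        natDegree_X_pow_sub_C] at this
      omega
    have := hco c hc
    rw [hf0, coeff_zero] at this
    exact this.symm
  · intro h
    have hf0 : f = 0 := Finset.sum_eq_zero fun c hc => by
      rw [h c (mem_range.mp hc), map_zero, zero_mul]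
    have h2 : (X ^ m - 1 : Polynomial (ZMod 4)) ∣ f := by rw [hf0]; exact dvd_zero _
    simpa using dvd_add hfold h2


lemma coeff_finSum {R : Type} [Semiring R] {α : ℕ} (w : Fin α → R) (n : ℕ) :
    (∑ i, C (w i) * X ^ (i : ℕ)).coeff n = if h : n < α then w ⟨n, h⟩ else 0 := by
  rw [finset_sum_coeff]
  simp only [coeff_C_mul, coeff_X_pow, mul_ite, mul_one, mul_zero]
  by_cases h : n < α
  · rw [dif_pos h, Finset.sum_eq_single (⟨n, h⟩ : Fin α)]
    · rw [if_pos rfl]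
    · intro i _ hne
      exact if_neg fun he => hne (Fin.ext he.symm)
    · intro habs; exact absurd (Finset.mem_univ _) habs
  · rw [dif_neg h]
    exact Finset.sum_eq_zero fun i _ => if_neg (fun he => h (by rw [he]; exact i.isLt))

lemma natDegree_finSum_lt {R : Type} [Semiring R] {α : ℕ} [NeZero α] (w : Fin α → R) :
    (∑ i, C (w i) * X ^ (i : ℕ)).natDegree < α := by
  have h0 : 0 < α := Nat.pos_of_ne_zero (NeZero.ne α)
  have : (∑ i, C (w i) * X ^ (i : ℕ)).natDegree ≤ α - 1 := by
    apply Polynomial.natDegree_sum_le_of_forall_le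
    intro i _
    exact le_trans (natDegree_C_mul_X_pow_le _ _) (by have := i.isLt; omega)
  omega

lemma coeff_sum_rev {R : Type} [Semiring R] (m : ℕ) (hm : 0 < m) (c : ℕ → R) (n : ℕ) :
    (∑ j ∈ range m, C (c j) * X ^ (m - 1 - j)).coeff n
      = if n < m then c (m - 1 - n) else 0 := by
  rw [finset_sum_coeff]
  simp only [coeff_C_mul, coeff_X_pow, mul_ite, mul_one, mul_zero]
  by_cases hn : n < m
  · rw [if_pos hn, Finset.sum_eq_single (m - 1 - n)]
    · rw [if_pos (by omega)]
    · intro j hj hne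
      rw [mem_range] at hj
      exact if_neg fun h => hne (by omega)
    · intro h; exact absurd (mem_range.mpr (by omega)) h
  · rw [if_neg hn]
    exact Finset.sum_eq_zero fun j hj => if_neg (by rw [mem_range] at hj; omega)

lemma revshift {R : Type} [CommSemiring R] (m : ℕ) (hm : 0 < m) (p : Polynomial R)
    (hp : p.natDegree < m) :
    X ^ (m - 1 - p.natDegree) * p.reverse
      = ∑ j ∈ range m, C (p.coeff j) * X ^ (m - 1 - j) := by
  ext n
  rw [coeff_sum_rev m hm, mul_comm, Polynomial.coeff_mul_X_pow']
  by_cases hn : n < m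
  · rw [if_pos hn]
    by_cases hle : m - 1 - p.natDegree ≤ n
    · rw [if_pos hle, Polynomial.coeff_reverse]
      by_cases hd : n - (m - 1 - p.natDegree) ≤ p.natDegree
      · rw [Polynomial.revAt_le hd]
        congr 1
        omega
      · rw [Polynomial.revAt_eq_self_of_lt (by omega)]
        rw [Polynomial.coeff_eq_zero_of_natDegree_lt (by omega),
          Polynomial.coeff_eq_zero_of_natDegree_lt (by omega)]
    · rw [if_neg hle]
      exact (Polynomial.coeff_eq_zero_of_natDegree_lt (by omega)).symm
  · rw [if_neg hn, if_pos (by omega), Polynomial.coeff_reverse,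
      Polynomial.revAt_eq_self_of_lt (by omega)]
    exact Polynomial.coeff_eq_zero_of_natDegree_lt (by omega)


lemma coeff_lift24 (p : Polynomial (ZMod 2)) (n : ℕ) :
    (lift24 p).coeff n = (((p.coeff n).val : ℕ) : ZMod 4) := by
  rw [lift24, finset_sum_coeff]
  simp only [coeff_C_mul, coeff_X_pow, mul_ite, mul_one, mul_zero]
  rw [Finset.sum_ite_eq]
  by_cases h : n ∈ p.support
  · rw [if_pos h]
  · rw [if_neg h, Polynomial.notMem_support_iff.mp h]
    simp

lemma lift24_as_sum (p : Polynomial (ZMod 2)) (N : ℕ) (hp : p.natDegree < N) :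
    lift24 p = ∑ i ∈ range N, C (((p.coeff i).val : ℕ) : ZMod 4) * X ^ i := by
  ext n
  rw [coeff_lift24, finset_sum_coeff]
  simp only [coeff_C_mul, coeff_X_pow, mul_ite, mul_one, mul_zero]
  rw [Finset.sum_ite_eq]
  by_cases h : n ∈ range N
  · rw [if_pos h]
  · rw [if_neg h, Polynomial.coeff_eq_zero_of_natDegree_lt (by rw [mem_range] at h; omega)]
    simp

lemma lift24_Xpow_mul (s : ℕ) (p : Polynomial (ZMod 2)) :
    lift24 (X ^ s * p) = X ^ s * lift24 p := by
  ext n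
  rw [coeff_lift24, mul_comm ((X : Polynomial (ZMod 2)) ^ s),
    mul_comm ((X : Polynomial (ZMod 4)) ^ s), Polynomial.coeff_mul_X_pow',
    Polynomial.coeff_mul_X_pow']
  split
  · rw [coeff_lift24]
  · simp

lemma lift24_revshift (m : ℕ) (hm : 0 < m) (p : Polynomial (ZMod 2)) (hp : p.natDegree < m) :
    X ^ (m - 1 - p.natDegree) * lift24 p.reverse
      = ∑ j ∈ range m, C (((p.coeff j).val : ℕ) : ZMod 4) * X ^ (m - 1 - j) := by
  rw [← lift24_Xpow_mul, revshift m hm p hp]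
  ext n
  rw [coeff_lift24, coeff_sum_rev m hm, coeff_sum_rev m hm]
  split
  · rfl
  · simp

lemma two_mul_sum (N : ℕ) (a : ℕ → ZMod 4) :
    (2 : Polynomial (ZMod 4)) * ∑ i ∈ range N, C (a i) * X ^ i
      = ∑ i ∈ range N, C (2 * a i) * X ^ i := by
  rw [Finset.mul_sum]
  refine Finset.sum_congr rfl fun i _ => ?_
  rw [map_mul, map_ofNat]
  ring

lemma tripleProd (n1 n2 n3 : ℕ) (a b : ℕ → ZMod 4) (e f g : ℕ → ℕ) :
    (∑ i ∈ range n1, C (a i) * X ^ e i) * (∑ t ∈ range n2, X ^ f t)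
        * (∑ j ∈ range n3, C (b j) * X ^ g j)
      = ∑ i ∈ range n1, ∑ t ∈ range n2, ∑ j ∈ range n3,
          C (a i * b j) * X ^ (e i + f t + g j) := by
  rw [Finset.sum_mul_sum, Finset.sum_mul]
  refine Finset.sum_congr rfl fun i _ => ?_
  rw [Finset.sum_mul]
  refine Finset.sum_congr rfl fun t _ => ?_
  rw [Finset.mul_sum]
  refine Finset.sum_congr rfl fun j _ => ?_
  rw [map_mul]
  ring

lemma sum_double {M : Type} [AddCommMonoid M] (m α' : ℕ) (hα' : α' ∣ m) (hα'0 : 0 < α')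
    (f : ℕ → M) :
    ∑ i ∈ range α', ∑ t ∈ range (m / α'), f (i + α' * t) = ∑ k ∈ range m, f k := by
  rw [← Finset.sum_product']
  refine Finset.sum_nbij' (fun p => p.1 + α' * p.2) (fun k => (k % α', k / α')) ?_ ?_ ?_ ?_ ?_
  · rintro ⟨i, t⟩ hp
    rw [Finset.mem_product, mem_range, mem_range] at hp
    rw [mem_range]
    have h1 : t + 1 ≤ m / α' := hp.2
    have h2 : α' * (t + 1) ≤ α' * (m / α') := Nat.mul_le_mul_left _ h1
    rw [Nat.mul_div_cancel' hα'] at h2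
    have h3 : α' * (t + 1) = α' * t + α' := by ring
    have h4 := hp.1
    simp only at *
    omega
  · intro k hk
    rw [mem_range] at hk
    rw [Finset.mem_product, mem_range, mem_range]
    exact ⟨Nat.mod_lt _ hα'0, Nat.div_lt_div_of_lt_of_dvd hα' hk⟩
  · rintro ⟨i, t⟩ hp
    rw [Finset.mem_product, mem_range, mem_range] at hp
    have h1 : (i + α' * t) % α' = i := by
      rw [Nat.add_mul_mod_self_left, Nat.mod_eq_of_lt hp.1]
    have h2 : (i + α' * t) / α' = t := by
      rw [Nat.add_mul_div_left _ _ hα'0, Nat.div_eq_of_lt hp.1, zero_add]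
    simp only [h1, h2]
  · intro k _
    simp only
    exact Nat.mod_add_div k α'
  · rintro ⟨i, t⟩ _
    rfl

lemma collapseT (m α' c : ℕ) (hα' : α' ∣ m) (hm : 0 < m) (hc : c < m)
    (a b : ℕ → ZMod 4) (hb : ∀ j, α' ≤ j → b j = 0) :
    Tc m c (∑ i ∈ range α', ∑ t ∈ range (m / α'), ∑ j ∈ range m,
        C (a i * b j) * X ^ (i + α' * t + (m - 1 - j)))
      = ∑ j ∈ range α', a ((c + 1 + j) % α') * b j := by
  haveI : NeZero m := ⟨hm.ne'⟩
  have hα'0 : 0 < α' := Nat.pos_of_dvd_of_pos hα' hm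
  have hcast : ∀ k j : ℕ, j < m →
      (((k + (m - 1 - j)) % m = c % m) ↔ ((k : ZMod m) = (c : ZMod m) + 1 + j)) := by
    intro k j hj
    have h3 : ((m - 1 - j : ℕ) : ZMod m) = -(1 + (j : ZMod m)) := by
      rw [show m - 1 - j = m - (1 + j) from by omega,
        Nat.cast_sub (by omega : 1 + j ≤ m)]
      push_cast
      rw [ZMod.natCast_self]
      ring
    constructor
    · intro h
      have h2 : ((k + (m - 1 - j) : ℕ) : ZMod m) = ((c : ℕ) : ZMod m) :=
        (ZMod.natCast_eq_natCast_iff _ _ _).mpr h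
      rw [Nat.cast_add, h3] at h2
      linear_combination h2
    · intro h
      apply (ZMod.natCast_eq_natCast_iff _ _ _).mp
      rw [Nat.cast_add, h3, h]
      ring
  calc Tc m c (∑ i ∈ range α', ∑ t ∈ range (m / α'), ∑ j ∈ range m,
        C (a i * b j) * X ^ (i + α' * t + (m - 1 - j)))
      = ∑ i ∈ range α', ∑ t ∈ range (m / α'), ∑ j ∈ range m,
          if (i + α' * t + (m - 1 - j)) % m = c % m then a i * b j else 0 := by
        rw [map_sum]
        refine Finset.sum_congr rfl fun i _ => ?_
        rw [map_sum]
        refine Finset.sum_congr rfl fun t _ => ?_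
        rw [map_sum]
        exact Finset.sum_congr rfl fun j _ => Tc_monomial _ _ _ _
    _ = ∑ i ∈ range α', ∑ t ∈ range (m / α'), ∑ j ∈ range m,
          if ((i + α' * t) + (m - 1 - j)) % m = c % m
            then a ((i + α' * t) % α') * b j else 0 := by
        refine Finset.sum_congr rfl fun i hi => Finset.sum_congr rfl fun t _ =>
          Finset.sum_congr rfl fun j _ => ?_
        rw [Nat.add_mul_mod_self_left, Nat.mod_eq_of_lt (mem_range.mp hi)]
    _ = ∑ k ∈ range m, ∑ j ∈ range m,
          if (k + (m - 1 - j)) % m = c % m then a (k % α') * b j else 0 :=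
        sum_double m α' hα' hα'0
          (fun k => ∑ j ∈ range m,
            if (k + (m - 1 - j)) % m = c % m then a (k % α') * b j else 0)
    _ = ∑ j ∈ range m, ∑ k ∈ range m,
          if (k + (m - 1 - j)) % m = c % m then a (k % α') * b j else 0 :=
        Finset.sum_comm
    _ = ∑ j ∈ range m, a ((c + 1 + j) % α') * b j := by
        refine Finset.sum_congr rfl fun j hj => ?_
        rw [mem_range] at hj
        have hk0m : (c + 1 + j) % m < m := Nat.mod_lt _ hm
        have hk0cast : (((c + 1 + j) % m : ℕ) : ZMod m) = (c : ZMod m) + 1 + j := by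
          rw [ZMod.natCast_mod]
          push_cast
          ring
        rw [Finset.sum_eq_single_of_mem ((c + 1 + j) % m) (mem_range.mpr hk0m)]
        · rw [if_pos ((hcast _ j hj).mpr hk0cast), Nat.mod_mod_of_dvd _ hα']
        · intro k hk hne
          refine if_neg fun hcond => hne ?_
          have h1 : (k : ZMod m) = (((c + 1 + j) % m : ℕ) : ZMod m) := by
            rw [hk0cast]
            exact (hcast k j hj).mp hcond
          have h2 := congrArg ZMod.val h1
          rwa [ZMod.val_cast_of_lt (mem_range.mp hk), ZMod.val_cast_of_lt hk0m] at h2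
    _ = ∑ j ∈ range α', a ((c + 1 + j) % α') * b j := by
        refine (Finset.sum_subset (Finset.range_subset_range.mpr (Nat.le_of_dvd hm hα')) ?_).symm
        intro j _ hj'
        rw [hb j (by rwa [mem_range, not_lt] at hj'), mul_zero]

lemma coeff_polyOf2 {α : ℕ} (w : Fin α → ZMod 2) (n : ℕ) :
    (polyOf2 w).coeff n = if h : n < α then w ⟨n, h⟩ else 0 := coeff_finSum w n

lemma coeff_polyOf4 {β : ℕ} (w : Fin β → ZMod 4) (n : ℕ) :
    (polyOf4 w).coeff n = if h : n < β then w ⟨n, h⟩ else 0 := coeff_finSum w n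

lemma as_sum_C {R : Type} [Semiring R] (p : Polynomial R) (N : ℕ) (h : p.natDegree < N) :
    p = ∑ i ∈ Finset.range N, C (p.coeff i) * X ^ i := by
  conv_lhs => rw [Polynomial.as_sum_range' p N h]
  exact Finset.sum_congr rfl fun i _ => (C_mul_X_pow_eq_monomial).symm

/-- `u` is orthogonal to `v` and all its cyclic shifts if and only if
`u(x) ∘ v(x) = 0` in `Z₄[x]/(x^m - 1)`, where `m = lcm(α,β)`. -/
theorem orthogonal_all_shifts_iff_circ_eq_zero (α β : ℕ) [NeZero α] [NeZero β]
    (u v : (Fin α → ZMod 2) × (Fin β → ZMod 4)) :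
    (∀ i : ℕ, innerZ2Z4 u (cshiftIter i v) = 0) ↔
      (X ^ Nat.lcm α β - 1 : Polynomial (ZMod 4)) ∣
        circ α β (polyOf2 u.1) (polyOf2 v.1) (polyOf4 u.2) (polyOf4 v.2) := by
  classical
  set m := Nat.lcm α β with hm_def
  have hαm : α ∣ m := Nat.dvd_lcm_left _ _
  have hβm : β ∣ m := Nat.dvd_lcm_right _ _
  have hα0 : 0 < α := Nat.pos_of_ne_zero (NeZero.ne α)
  have hβ0 : 0 < β := Nat.pos_of_ne_zero (NeZero.ne β)
  have hm0 : 0 < m := Nat.pos_of_ne_zero (Nat.lcm_ne_zero hα0.ne' hβ0.ne')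
  have hαle : α ≤ m := Nat.le_of_dvd hm0 hαm
  have hβle : β ≤ m := Nat.le_of_dvd hm0 hβm
  have hd2u : (polyOf2 u.1).natDegree < α := natDegree_finSum_lt _
  have hd2v : (polyOf2 v.1).natDegree < α := natDegree_finSum_lt _
  have hd4u : (polyOf4 u.2).natDegree < β := natDegree_finSum_lt _
  have hd4v : (polyOf4 v.2).natDegree < β := natDegree_finSum_lt _
  have hbV : ∀ j, α ≤ j → ((((polyOf2 v.1).coeff j).val : ℕ) : ZMod 4) = 0 := by
    intro j hj
    rw [Polynomial.coeff_eq_zero_of_natDegree_lt (lt_of_lt_of_le hd2v hj)]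
    simp
  have hbV4 : ∀ j, β ≤ j → (polyOf4 v.2).coeff j = 0 := fun j hj =>
    Polynomial.coeff_eq_zero_of_natDegree_lt (lt_of_lt_of_le hd4v hj)
  have hcirc : circ α β (polyOf2 u.1) (polyOf2 v.1) (polyOf4 u.2) (polyOf4 v.2)
      = (∑ i ∈ Finset.range α, ∑ t ∈ Finset.range (m / α), ∑ j ∈ Finset.range m,
          C ((2 * ((((polyOf2 u.1).coeff i).val : ℕ) : ZMod 4))
              * ((((polyOf2 v.1).coeff j).val : ℕ) : ZMod 4))
            * X ^ (i + α * t + (m - 1 - j)))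
        + (∑ i ∈ Finset.range β, ∑ t ∈ Finset.range (m / β), ∑ j ∈ Finset.range m,
          C ((polyOf4 u.2).coeff i * (polyOf4 v.2).coeff j)
            * X ^ (i + β * t + (m - 1 - j))) := by
    have hpart1 : 2 * lift24 (polyOf2 u.1) * thetaPow (m / α) α
          * X ^ (m - 1 - (polyOf2 v.1).natDegree) * lift24 (polyOf2 v.1).reverse
        = ∑ i ∈ Finset.range α, ∑ t ∈ Finset.range (m / α), ∑ j ∈ Finset.range m,
          C ((2 * ((((polyOf2 u.1).coeff i).val : ℕ) : ZMod 4))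
              * ((((polyOf2 v.1).coeff j).val : ℕ) : ZMod 4))
            * X ^ (i + α * t + (m - 1 - j)) := by
      rw [mul_assoc (2 * lift24 (polyOf2 u.1) * thetaPow (m / α) α),
        lift24_revshift m hm0 _ (lt_of_lt_of_le hd2v hαle),
        lift24_as_sum (polyOf2 u.1) α hd2u, two_mul_sum, thetaPow]
      exact tripleProd α (m / α) m _ _ (fun i => i) (fun t => α * t) (fun j => m - 1 - j)
    have hpart2 : polyOf4 u.2 * thetaPow (m / β) β
          * X ^ (m - 1 - (polyOf4 v.2).natDegree) * (polyOf4 v.2).reverse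
        = ∑ i ∈ Finset.range β, ∑ t ∈ Finset.range (m / β), ∑ j ∈ Finset.range m,
          C ((polyOf4 u.2).coeff i * (polyOf4 v.2).coeff j)
            * X ^ (i + β * t + (m - 1 - j)) := by
      rw [mul_assoc (polyOf4 u.2 * thetaPow (m / β) β),
        revshift m hm0 _ (lt_of_lt_of_le hd4v hβle)]
      nth_rewrite 1 [as_sum_C (polyOf4 u.2) β hd4u]
      rw [thetaPow]
      exact tripleProd β (m / β) m _ _ (fun i => i) (fun t => β * t) (fun j => m - 1 - j)
    rw [circ]
    simp only [← hm_def]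
    rw [hpart1, hpart2]
  have h0α : ((m : ℕ) : Fin α) = 0 := by
    obtain ⟨k, hk⟩ := hαm
    calc ((m : ℕ) : Fin α) = ((α * k : ℕ) : Fin α) := by rw [← hk]
      _ = ((α : ℕ) : Fin α) * ((k : ℕ) : Fin α) := by push_cast; ring
      _ = 0 := by rw [Fin.natCast_self, zero_mul]
  have h0β : ((m : ℕ) : Fin β) = 0 := by
    obtain ⟨k, hk⟩ := hβm
    calc ((m : ℕ) : Fin β) = ((β * k : ℕ) : Fin β) := by rw [← hk]
      _ = ((β : ℕ) : Fin β) * ((k : ℕ) : Fin β) := by push_cast; ring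
      _ = 0 := by rw [Fin.natCast_self, zero_mul]
  have hTc : ∀ c, c < m →
      Tc m c (circ α β (polyOf2 u.1) (polyOf2 v.1) (polyOf4 u.2) (polyOf4 v.2))
        = innerZ2Z4 u (cshiftIter (m - (c + 1)) v) := by
    intro c hc
    rw [hcirc, map_add,
      collapseT m α c hαm hm0 hc
        (fun i => 2 * ((((polyOf2 u.1).coeff i).val : ℕ) : ZMod 4))
        (fun j => ((((polyOf2 v.1).coeff j).val : ℕ) : ZMod 4)) hbV,
      collapseT m β c hβm hm0 hc
        (fun i => (polyOf4 u.2).coeff i) (fun j => (polyOf4 v.2).coeff j) hbV4]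
    have hsum0α : ((c + 1 : ℕ) : Fin α) + ((m - (c + 1) : ℕ) : Fin α) = 0 := by
      rw [← Nat.cast_add, show (c + 1) + (m - (c + 1)) = m from by omega, h0α]
    have hsum0β : ((c + 1 : ℕ) : Fin β) + ((m - (c + 1) : ℕ) : Fin β) = 0 := by
      rw [← Nat.cast_add, show (c + 1) + (m - (c + 1)) = m from by omega, h0β]
    have hbin : (∑ j ∈ Finset.range α,
          (2 * ((((polyOf2 u.1).coeff ((c + 1 + j) % α)).val : ℕ) : ZMod 4))
            * ((((polyOf2 v.1).coeff j).val : ℕ) : ZMod 4))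
        = 2 * ∑ i : Fin α, ((u.1 i).val : ZMod 4)
            * (((v.1 (i + ((m - (c + 1) : ℕ) : Fin α))).val : ℕ) : ZMod 4) := by
      rw [Finset.mul_sum,
        ← Fin.sum_univ_eq_sum_range (fun j =>
          (2 * ((((polyOf2 u.1).coeff ((c + 1 + j) % α)).val : ℕ) : ZMod 4))
            * ((((polyOf2 v.1).coeff j).val : ℕ) : ZMod 4)) α]
      refine Fintype.sum_equiv (Equiv.addLeft (((c + 1 : ℕ)) : Fin α)) _ _ ?_
      intro j
      simp only [Equiv.coe_addLeft]
      have hlt : (c + 1 + (j : ℕ)) % α < α := Nat.mod_lt _ hα0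
      have h1 : (polyOf2 u.1).coeff ((c + 1 + (j : ℕ)) % α)
          = u.1 ((((c + 1 : ℕ)) : Fin α) + j) := by
        rw [coeff_polyOf2, dif_pos hlt]
        congr 1
        apply Fin.ext
        simp [Fin.add_def, Fin.val_natCast, Nat.mod_add_mod]
      have h2 : (polyOf2 v.1).coeff ((j : ℕ)) = v.1 j := by
        rw [coeff_polyOf2, dif_pos j.isLt]
      have h3 : (((c + 1 : ℕ)) : Fin α) + j + (((m - (c + 1) : ℕ)) : Fin α) = j := by
        calc (((c + 1 : ℕ)) : Fin α) + j + (((m - (c + 1) : ℕ)) : Fin α)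
            = j + ((((c + 1 : ℕ)) : Fin α) + (((m - (c + 1) : ℕ)) : Fin α)) := by ring
          _ = j := by rw [hsum0α, add_zero]
      rw [h1, h2, h3]
      ring
    have hquat : (∑ j ∈ Finset.range β,
          (polyOf4 u.2).coeff ((c + 1 + j) % β) * (polyOf4 v.2).coeff j)
        = ∑ i : Fin β, u.2 i * v.2 (i + ((m - (c + 1) : ℕ) : Fin β)) := by
      rw [← Fin.sum_univ_eq_sum_range (fun j =>
        (polyOf4 u.2).coeff ((c + 1 + j) % β) * (polyOf4 v.2).coeff j) β]
      refine Fintype.sum_equiv (Equiv.addLeft (((c + 1 : ℕ)) : Fin β)) _ _ ?_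
      intro j
      simp only [Equiv.coe_addLeft]
      have hlt : (c + 1 + (j : ℕ)) % β < β := Nat.mod_lt _ hβ0
      have h1 : (polyOf4 u.2).coeff ((c + 1 + (j : ℕ)) % β)
          = u.2 ((((c + 1 : ℕ)) : Fin β) + j) := by
        rw [coeff_polyOf4, dif_pos hlt]
        congr 1
        apply Fin.ext
        simp [Fin.add_def, Fin.val_natCast, Nat.mod_add_mod]
      have h2 : (polyOf4 v.2).coeff ((j : ℕ)) = v.2 j := by
        rw [coeff_polyOf4, dif_pos j.isLt]
      have h3 : (((c + 1 : ℕ)) : Fin β) + j + (((m - (c + 1) : ℕ)) : Fin β) = j := by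
        calc (((c + 1 : ℕ)) : Fin β) + j + (((m - (c + 1) : ℕ)) : Fin β)
            = j + ((((c + 1 : ℕ)) : Fin β) + (((m - (c + 1) : ℕ)) : Fin β)) := by ring
          _ = j := by rw [hsum0β, add_zero]
      rw [h1, h2, h3]
    simp only [innerZ2Z4, cshiftIter, Fin.ofNat_eq_cast]
    rw [hbin, hquat]
  have hper : ∀ i : ℕ, cshiftIter (α := α) (β := β) i v = cshiftIter (i % m) v := by
    intro i
    have hA : ((i : ℕ) : Fin α) = ((i % m : ℕ) : Fin α) := by
      apply Fin.ext
      rw [Fin.val_natCast, Fin.val_natCast, Nat.mod_mod_of_dvd _ hαm]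
    have hB : ((i : ℕ) : Fin β) = ((i % m : ℕ) : Fin β) := by
      apply Fin.ext
      rw [Fin.val_natCast, Fin.val_natCast, Nat.mod_mod_of_dvd _ hβm]
    simp only [cshiftIter, Fin.ofNat_eq_cast]
    rw [hA, hB]
  constructor
  · intro h
    rw [dvd_iff_Tc m hm0]
    intro c hc
    rw [hTc c hc]
    exact h _
  · intro h i
    have hr : i % m < m := Nat.mod_lt _ hm0
    have h' := (dvd_iff_Tc m hm0 _).mp h (m - 1 - i % m) (by omega)
    rw [hTc _ (by omega)] at h'
    rw [show m - (m - 1 - i % m + 1) = i % m from by omega] at h'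
    calc innerZ2Z4 u (cshiftIter i v) = innerZ2Z4 u (cshiftIter (i % m) v) := by rw [hper i]
      _ = 0 := h'
end

section
/- Over a field F, if a, b are polynomials with a | b and b | x^β - 1, and a, b, and their reductions satisfy the Hensel lifting setup over Z_4 with β odd, then the Hensel lift of a divides the Hensel lift of b in Z_4[x]. More precisely: if β is odd and ā | b̄ | x^β - 1 in Z_2[x], then the unique monic divisor a of x^β - 1 in Z_4[x] reducing to ā divides the unique monic divisor b of x^β - 1 in Z_4[x] reducing to b̄. -/
open Polynomial

/-- Reduction modulo 2, `Z₄[x] → Z₂[x]`. -/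
noncomputable def red42 : Polynomial (ZMod 4) →+* Polynomial (ZMod 2) :=
  Polynomial.mapRingHom (ZMod.castHom (show 2 ∣ 4 by norm_num) (ZMod 2))

lemma red42_coeff (f : Polynomial (ZMod 4)) (n : ℕ) :
    (red42 f).coeff n = ZMod.castHom (show 2 ∣ 4 by norm_num) (ZMod 2) (f.coeff n) := by
  simp [red42, coeff_map]

lemma cast_eq_zero_of_two_mul (c : ZMod 4) (h : 2 * c = 0) :
    ZMod.castHom (show 2 ∣ 4 by norm_num) (ZMod 2) c = 0 := by
  revert h; revert c; decide

lemma half_of_cast_eq_zero (c : ZMod 4)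
    (h : ZMod.castHom (show 2 ∣ 4 by norm_num) (ZMod 2) c = 0) :
    2 * ((c.val / 2 : ℕ) : ZMod 4) = c := by
  revert h; revert c; decide

lemma red42_zero_of_two_mul (f : Polynomial (ZMod 4)) (h : C 2 * f = 0) :
    red42 f = 0 := by
  ext n
  rw [red42_coeff, coeff_zero]
  apply cast_eq_zero_of_two_mul
  have := congrArg (fun p => Polynomial.coeff p n) h
  simpa [coeff_C_mul] using this

lemma exists_half (f : Polynomial (ZMod 4)) (h : red42 f = 0) :
    ∃ g, f = C 2 * g := by
  refine ⟨f.sum fun n c => C ((c.val / 2 : ℕ) : ZMod 4) * X ^ n, ?_⟩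
  conv_lhs => rw [← f.sum_C_mul_X_pow_eq]
  rw [Polynomial.sum, Polynomial.sum, Finset.mul_sum]
  refine Finset.sum_congr rfl fun n _ => ?_
  rw [← mul_assoc, ← C_mul, half_of_cast_eq_zero]
  have := congrArg (fun p => Polynomial.coeff p n) h
  simpa [red42_coeff] using this

lemma red42_two_mul (f : Polynomial (ZMod 4)) : red42 (C 2 * f) = 0 := by
  have : red42 (C 2 * f) = red42 (C 2) * red42 f := map_mul _ _ _
  rw [this]
  have h2 : red42 (C (2 : ZMod 4)) = 0 := by
    simp [red42, map_C]
    decide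
  rw [h2, zero_mul]

/-- For `β` odd: if `a` and `b` are monic divisors of `x^β - 1` in `Z₄[x]`
(i.e. the Hensel lifts of their reductions mod 2) and the reduction of `a`
divides the reduction of `b` in `Z₂[x]`, then `a` divides `b` in `Z₄[x]`. -/
theorem hensel_lift_dvd_of_dvd (β : ℕ) (hβ : Odd β)
    (a b : Polynomial (ZMod 4)) (ha : a.Monic) (hb : b.Monic)
    (haX : a ∣ X ^ β - 1) (hbX : b ∣ X ^ β - 1)
    (hdvd : red42 a ∣ red42 b) :
    a ∣ b := by
  -- surjectivity of red42
  have hsurj : Function.Surjective red42 := by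
    apply Polynomial.map_surjective
    decide
  obtain ⟨u, hu⟩ := haX
  obtain ⟨d, hd⟩ := hbX
  obtain ⟨cbar, hc⟩ := hdvd
  obtain ⟨q, hq⟩ := hsurj cbar
  -- b - a*q reduces to 0
  have hr0 : red42 (b - a * q) = 0 := by
    rw [map_sub, map_mul, hq, hc, sub_self]
  obtain ⟨r, hr⟩ := exists_half _ hr0
  have hb' : b = a * q + C 2 * r := by rw [← hr]; ring
  -- a * (u - q*d) = C 2 * (r * d)
  have key : a * (u - q * d) = C 2 * (r * d) := by
    have h1 : a * u = (a * q + C 2 * r) * d := by rw [← hb', ← hu, ← hd]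
    ring_nf
    ring_nf at h1
    linear_combination h1
  have hw0 : red42 (u - q * d) = 0 := by
    have h2 : red42 a * red42 (u - q * d) = 0 := by
      rw [← map_mul, key, red42_two_mul]
    have hane : red42 a ≠ 0 := by
      have : (red42 a).Monic := ha.map _
      exact this.ne_zero
    rcases mul_eq_zero.mp h2 with h | h
    · exact absurd h hane
    · exact h
  obtain ⟨w, hw⟩ := exists_half _ hw0
  -- C 2 * (a*w - r*d) = 0
  have h20 : C 2 * (a * w - r * d) = 0 := by
    have : a * (C 2 * w) = C 2 * (r * d) := by rw [← hw, key]
    have h4 : (C (2:ZMod 4)) * (C (2:ZMod 4)) = 0 := by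
      rw [← C_mul, show (2 * 2 : ZMod 4) = 0 from rfl, C_0]
    linear_combination this
  have hred : red42 (a * w - r * d) = 0 := red42_zero_of_two_mul _ h20
  have heq : red42 a * red42 w = red42 r * red42 d := by
    have h := hred
    rw [map_sub, map_mul, map_mul, sub_eq_zero] at h
    exact h
  -- separability / coprimality
  have hsep : (X ^ β - 1 : Polynomial (ZMod 2)).Separable := by
    have : ((β : ZMod 2)) ≠ 0 := by
      have := hβ
      rcases this with ⟨k, hk⟩
      subst hk
      push_cast
      intro hcon
      rw [show ((2:ZMod 2)) = 0 from rfl, zero_mul, zero_add] at hcon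
      exact one_ne_zero hcon
    have h1 : (X ^ β - C (1 : ZMod 2)).Separable :=
      Polynomial.separable_X_pow_sub_C (1 : ZMod 2) this one_ne_zero
    simpa using h1
  have hXred : red42 (X ^ β - 1) = X ^ β - 1 := by
    simp [red42]
  have hprod : red42 a * red42 d ∣ (X ^ β - 1 : Polynomial (ZMod 2)) := by
    rw [← hXred, hd, map_mul]
    exact mul_dvd_mul (Dvd.intro _ (by rw [← hc])) dvd_rfl
  have hcop : IsCoprime (red42 a) (red42 d) :=
    (hsep.of_dvd hprod).isCoprime
  -- red a ∣ red r
  have hadr : red42 a ∣ red42 r * red42 d := ⟨red42 w, heq.symm⟩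
  have har : red42 a ∣ red42 r := hcop.dvd_of_dvd_mul_right hadr
  obtain ⟨mbar, hm⟩ := har
  obtain ⟨M, hM⟩ := hsurj mbar
  have hrm : red42 (r - a * M) = 0 := by
    rw [map_sub, map_mul, hM, ← hm, sub_self]
  obtain ⟨s, hs⟩ := exists_half _ hrm
  -- C 2 * r = C 2 * a * M  since C 2 * C 2 = 0
  have h2r : C 2 * r = a * (C 2 * M) := by
    have h4 : (C (2:ZMod 4)) * (C (2:ZMod 4)) = 0 := by
      rw [← C_mul, show (2 * 2 : ZMod 4) = 0 from rfl, C_0]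
    have : C 2 * (r - a * M) = C 2 * (C 2 * s) := by rw [hs]
    rw [← mul_assoc, h4, zero_mul, mul_sub, sub_eq_zero] at this
    rw [this]; ring
  exact ⟨q + C 2 * M, by rw [hb', h2r]; ring⟩
end

section
/- Let C = ⟨(b|0), (ℓ | fh + 2f)⟩ be a Z_2Z_4-additive cyclic code with fhg = x^β - 1 in Z_4[x], β odd, and b | x^α - 1 in Z_2[x], where b divides ((x^β-1)/f)·ℓ mod 2. Then b divides ((x^β-1)/f)·gcd(b, ℓ) mod 2 and b divides h·gcd(b, ℓg) mod 2 (computations in Z_2[x], with f, g, h reduced mod 2). -/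
open Polynomial

/-- Standard-form conditions on the generators of a `Z₂Z₄`-additive cyclic
code `C = ⟨(b|0), (ℓ | fh+2f)⟩`: if `b | (x^α-1)`, `deg ℓ < deg b`,
`fhg = x^β-1` in `Z₄[x]` (`β` odd) and `b | ((x^β-1)/f)·ℓ (mod 2)`, then
`b | ((x^β-1)/f)·gcd(b,ℓ) (mod 2)` and `b | h·gcd(b,ℓg) (mod 2)`.
Note `(x^β-1)/f = hg`. -/
theorem b_dvd_gcd_conditions (α β : ℕ) (hα : 0 < α) (hβ : Odd β)
    (f g h : Polynomial (ZMod 4)) (hf : f.Monic) (hg : g.Monic) (hh : h.Monic)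
    (hfac : f * h * g = X ^ β - 1)
    (b ℓ : Polynomial (ZMod 2)) (hb : b ∣ X ^ α - 1) (hℓ : ℓ.degree < b.degree)
    (hdvd : b ∣ red42 (h * g) * ℓ) :
    b ∣ red42 (h * g) * EuclideanDomain.gcd b ℓ ∧
      b ∣ red42 h * EuclideanDomain.gcd b (ℓ * red42 g) := by
  obtain ⟨c, hc⟩ := hdvd
  constructor
  · rw [EuclideanDomain.gcd_eq_gcd_ab b ℓ]
    refine ⟨red42 (h * g) * EuclideanDomain.gcdA b ℓ + c * EuclideanDomain.gcdB b ℓ, ?_⟩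
    have : red42 (h * g) * ℓ = b * c := hc
    ring_nf
    rw [this]
    ring
  · rw [EuclideanDomain.gcd_eq_gcd_ab b (ℓ * red42 g)]
    refine ⟨red42 h * EuclideanDomain.gcdA b (ℓ * red42 g)
      + c * EuclideanDomain.gcdB b (ℓ * red42 g), ?_⟩
    have h2 : red42 h * (ℓ * red42 g) = b * c := by
      rw [← hc, map_mul]; ring
    calc red42 h * (b * EuclideanDomain.gcdA b (ℓ * red42 g)
          + ℓ * red42 g * EuclideanDomain.gcdB b (ℓ * red42 g))
        = b * (red42 h * EuclideanDomain.gcdA b (ℓ * red42 g))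
          + (red42 h * (ℓ * red42 g)) * EuclideanDomain.gcdB b (ℓ * red42 g) := by ring
      _ = _ := by rw [h2]; ring
end

section
/- Let C = ⟨(b|0), (0 | fh+2f)⟩ be a separable Z_2Z_4-additive cyclic code with fgh = x^β-1, β odd. Then C⊥ = ⟨((x^α-1)/b* | 0), (0 | g*h* + 2g*)⟩. -/
open Polynomial

/-- Membership in the `Z₂Z₄`-additive cyclic code `C = ⟨(b|0), (ℓ|q)⟩`. -/
def memC {α β : ℕ} (b ℓ : Polynomial (ZMod 2)) (q : Polynomial (ZMod 4))
    (z : (Fin α → ZMod 2) × (Fin β → ZMod 4)) : Prop :=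
  ∃ lam mu : Polynomial (ZMod 4),
    (X ^ α - 1 : Polynomial (ZMod 2)) ∣
        polyOf2 z.1 - (red42 lam * b + red42 mu * ℓ) ∧
    (X ^ β - 1 : Polynomial (ZMod 4)) ∣ polyOf4 z.2 - mu * q

set_option linter.unusedSectionVars false
set_option linter.unusedVariables false
set_option maxHeartbeats 1000000


section Generic
variable {R : Type*} [CommRing R] [Nontrivial R]

noncomputable def polG {n : ℕ} (u : Fin n → R) : R[X] := ∑ i, C (u i) * X ^ (i : ℕ)

lemma AR0 {n : ℕ} (hn : 0 < n) (j : ℕ) : j * (n - 1) + j = j * n := by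
  cases n with
  | zero => omega
  | succ m => simp [Nat.mul_succ]

lemma AR1 {n i j : ℕ} (hn : 0 < n) (hi : i < n) (hj : j < n) :
    n ∣ i + j * (n - 1) ↔ i = j := by
  constructor
  · intro hd
    obtain ⟨c, hc⟩ := hd
    have e : i + j * n = (i + j * (n - 1)) + j := by have := AR0 hn j; omega
    have h2 : (i + j * n) % n = i := by
      rw [Nat.add_mul_mod_self_right]; exact Nat.mod_eq_of_lt hi
    have h3 : ((i + j * (n - 1)) + j) % n = j := by
      rw [hc, Nat.mul_add_mod]; exact Nat.mod_eq_of_lt hj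
    rw [← e] at h3
    omega
  · rintro rfl
    exact ⟨i, by rw [add_comm, AR0 hn i, Nat.mul_comm]⟩

lemma AR2 {n j t : ℕ} (hj : j < n) (ht : t < n) : n ∣ (n - j) + t ↔ t = j := by
  constructor
  · intro hd
    have hpos : 0 < (n - j) + t := by omega
    have hle : n ≤ (n - j) + t := Nat.le_of_dvd hpos hd
    have h2 : n ∣ ((n - j) + t) - n := (Nat.dvd_sub hd dvd_rfl)
    have h3 : ((n - j) + t) - n = 0 := by
      rcases Nat.eq_zero_or_pos ((n - j) + t - n) with h0 | hpos'
      · exact h0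
      · exact Nat.eq_zero_of_dvd_of_lt h2 (by omega)
    omega
  · rintro rfl
    exact ⟨1, by omega⟩

lemma dvd_X_pow_mul_sub (n e : ℕ) : (X ^ n - 1 : R[X]) ∣ X ^ (n * e) - 1 := by
  have := sub_dvd_pow_sub_pow (X ^ n : R[X]) 1 e
  simpa [pow_mul] using this

lemma dvd_X_pow_sub_X_pow {n a c : ℕ} (hn : 0 < n) (h : a % n = c % n) :
    (X ^ n - 1 : R[X]) ∣ X ^ a - X ^ c := by
  wlog hac : c ≤ a generalizing a c
  · have := this h.symm (by omega)
    simpa using (dvd_neg.mpr this)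
  obtain ⟨k, hk⟩ : n ∣ a - c := (Nat.modEq_iff_dvd' hac).mp h.symm
  have h1 : (X ^ n - 1 : R[X]) ∣ X ^ c * (X ^ (n * k) - 1) := by
    exact Dvd.dvd.mul_left (dvd_X_pow_mul_sub n k) _
  have h2 : X ^ c * ((X:R[X]) ^ (n * k) - 1) = X ^ a - X ^ c := by
    rw [mul_sub, mul_one, ← pow_add]
    congr 2
    omega
  rwa [h2] at h1

lemma monic_m {n : ℕ} (hn : 0 < n) : (X ^ n - 1 : R[X]).Monic := by
  simpa using monic_X_pow_sub_C (1 : R) hn.ne'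

lemma X_pow_modByMonic {n : ℕ} (hn : 0 < n) (e : ℕ) :
    (X : R[X]) ^ e %ₘ (X ^ n - 1) = X ^ (e % n) := by
  have h1 : (X ^ n - 1 : R[X]) ∣ X ^ e - X ^ (e % n) :=
    dvd_X_pow_sub_X_pow hn (by simp [Nat.mod_mod_of_dvd])
  rw [modByMonic_eq_of_dvd_sub (monic_m hn) h1]
  rw [modByMonic_eq_self_iff (monic_m hn)]
  calc degree ((X : R[X]) ^ (e % n)) = (e % n : ℕ) := by simp
  _ < (n : ℕ) := by exact_mod_cast Nat.cast_lt.mpr (Nat.mod_lt e hn)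
  _ = degree (X ^ n - 1 : R[X]) := by
      rw [← C_1, degree_X_pow_sub_C hn]

noncomputable def EE (n : ℕ) (p : R[X]) : R := (p %ₘ (X ^ n - 1)).coeff 0

lemma EE_congr {n : ℕ} (hn : 0 < n) {p q : R[X]} (h : (X ^ n - 1 : R[X]) ∣ p - q) :
    EE n p = EE n q := by
  unfold EE; rw [modByMonic_eq_of_dvd_sub (monic_m hn) h]

lemma EE_zero_of_dvd {n : ℕ} (hn : 0 < n) {p : R[X]} (h : (X ^ n - 1 : R[X]) ∣ p) :
    EE n p = 0 := by
  unfold EE; rw [(modByMonic_eq_zero_iff_dvd (monic_m hn)).mpr h, coeff_zero]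

lemma EE_sum {n : ℕ} {ι : Type*} (s : Finset ι) (f : ι → R[X]) :
    EE n (∑ i ∈ s, f i) = ∑ i ∈ s, EE n (f i) := by
  unfold EE
  have h1 : (∑ i ∈ s, f i) %ₘ (X ^ n - 1) = ∑ i ∈ s, f i %ₘ (X ^ n - 1) :=
    map_sum (Polynomial.modByMonicHom (X ^ n - 1)) f s
  rw [h1, Polynomial.finset_sum_coeff]

lemma EE_monomial {n : ℕ} (hn : 0 < n) (a : R) (e : ℕ) :
    EE n (C a * X ^ e) = if n ∣ e then a else 0 := by
  unfold EE
  have h1 : (C a * X ^ e) %ₘ (X ^ n - 1) = C a * ((X ^ e) %ₘ (X ^ n - 1)) := by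
    rw [← smul_eq_C_mul, ← smul_eq_C_mul, smul_modByMonic]
  rw [h1, X_pow_modByMonic hn, coeff_C_mul, coeff_X_pow]
  by_cases hd : n ∣ e
  · have : e % n = 0 := Nat.eq_zero_of_dvd_of_lt ((Nat.dvd_mod_iff dvd_rfl).mpr hd) (Nat.mod_lt e hn)
    simp [hd, this]
  · have : e % n ≠ 0 := fun hz => hd (Nat.dvd_of_mod_eq_zero hz)
    simp [hd, this, Ne.symm this]

lemma degree_m {n : ℕ} (hn : 0 < n) : (X ^ n - 1 : R[X]).degree = (n : ℕ) := by
  rw [← C_1, degree_X_pow_sub_C hn]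

lemma polG_coeffs {n : ℕ} (hn : 0 < n) {r : R[X]} (hr : r.degree < (n : ℕ)) :
    polG (fun i : Fin n => r.coeff i) = r := by
  ext k
  rw [polG, Polynomial.finset_sum_coeff]
  simp only [coeff_C_mul, coeff_X_pow, mul_ite, mul_one, mul_zero]
  rw [Fin.sum_univ_eq_sum_range (fun i => if k = i then r.coeff i else 0) n]
  rw [Finset.sum_ite_eq (Finset.range n) k (fun i => r.coeff i)]
  by_cases hk : k < n
  · simp [Finset.mem_range, hk]
  · have : r.coeff k = 0 := coeff_eq_zero_of_degree_lt
      (lt_of_lt_of_le hr (by exact_mod_cast Nat.le_of_not_lt hk))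
    simp [Finset.mem_range, hk, this]

lemma comp_X_pow_eq {n : ℕ} (v : Fin n → R) :
    (polG v).comp (X ^ (n - 1)) = ∑ j : Fin n, C (v j) * X ^ ((j : ℕ) * (n - 1)) := by
  rw [polG]
  calc (∑ j : Fin n, C (v j) * X ^ (j : ℕ)).comp (X ^ (n-1))
      = ∑ j : Fin n, (C (v j) * X ^ (j : ℕ)).comp (X ^ (n-1)) := by
        rw [Polynomial.comp, Polynomial.eval₂_finset_sum]; rfl
    _ = ∑ j : Fin n, C (v j) * X ^ ((j : ℕ) * (n - 1)) := by
        refine Finset.sum_congr rfl fun j _ => ?_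
        rw [mul_comp, C_comp, X_pow_comp, ← pow_mul, Nat.mul_comm]

lemma inner_eq {n : ℕ} (hn : 0 < n) (u v : Fin n → R) :
    ∑ i, u i * v i = EE n (polG u * (polG v).comp (X ^ (n - 1))) := by
  rw [comp_X_pow_eq, polG, Finset.sum_mul_sum]
  rw [EE_sum]
  have hterm : ∀ i : Fin n, EE n (∑ j : Fin n, C (u i) * X ^ (i:ℕ) * (C (v j) * X ^ ((j:ℕ) * (n-1))))
      = u i * v i := by
    intro i
    rw [EE_sum]
    have : ∀ j : Fin n, EE n (C (u i) * X ^ (i:ℕ) * (C (v j) * X ^ ((j:ℕ) * (n-1))))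
        = if i = j then u i * v j else 0 := by
      intro j
      have hmul : C (u i) * X ^ (i:ℕ) * (C (v j) * X ^ ((j:ℕ) * (n-1)))
          = C (u i * v j) * X ^ ((i:ℕ) + (j:ℕ) * (n-1)) := by
        rw [C_mul, pow_add]; ring
      rw [hmul, EE_monomial hn]
      exact if_congr ((AR1 hn i.isLt j.isLt).trans
        ⟨fun hh => Fin.ext hh, fun hh => by rw [hh]⟩) rfl rfl
    rw [Finset.sum_congr rfl fun j _ => this j]
    rw [Finset.sum_ite_eq Finset.univ i (fun j => u i * v j)]
    simp
  rw [Finset.sum_congr rfl fun i _ => hterm i]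

lemma EE_shift {n : ℕ} (hn : 0 < n) {k : ℕ} (hk : k < n) {r : R[X]}
    (hdeg : r.degree < (n : ℕ)) : EE n (X ^ (n - k) * r) = r.coeff k := by
  conv_lhs => rw [← polG_coeffs hn hdeg]
  rw [polG, Finset.mul_sum, EE_sum]
  have hterm : ∀ t : Fin n, EE n (X ^ (n-k) * (C (r.coeff (t:ℕ)) * X ^ (t:ℕ)))
      = if t = (⟨k, hk⟩ : Fin n) then r.coeff (t:ℕ) else 0 := by
    intro t
    have hmul : (X:R[X]) ^ (n-k) * (C (r.coeff (t:ℕ)) * X ^ (t:ℕ))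
        = C (r.coeff (t:ℕ)) * X ^ ((n - k) + (t:ℕ)) := by
      rw [pow_add]; ring
    rw [hmul, EE_monomial hn]
    exact if_congr ((AR2 hk t.isLt).trans
      ⟨fun hh => Fin.ext hh, fun hh => by rw [hh]⟩) rfl rfl
  rw [Finset.sum_congr rfl fun t _ => hterm t]
  rw [Finset.sum_ite_eq' Finset.univ (⟨k, hk⟩ : Fin n) (fun t => r.coeff (t:ℕ))]
  simp

lemma keyLemma {n : ℕ} (hn : 0 < n) (w : R[X]) (v : Fin n → R) :
    (∀ u : Fin n → R, (∃ μ : R[X], (X ^ n - 1 : R[X]) ∣ polG u - μ * w) →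
      ∑ i, u i * v i = 0)
    ↔ (X ^ n - 1 : R[X]) ∣ w * (polG v).comp (X ^ (n - 1)) := by
  constructor
  · intro H
    rw [← modByMonic_eq_zero_iff_dvd (monic_m hn)]
    set s := w * (polG v).comp (X ^ (n - 1)) with hs
    set r := s %ₘ (X ^ n - 1) with hr
    have hdeg : r.degree < (n : ℕ) := by
      rw [← degree_m (R := R) hn]; exact degree_modByMonic_lt s (monic_m hn)
    have hsr : (X ^ n - 1 : R[X]) ∣ s - r := by
      rw [hr, modByMonic_eq_sub_mul_div s (X ^ n - 1)]
      exact ⟨s /ₘ (X^n-1), by ring⟩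
    ext k
    rw [coeff_zero]
    by_cases hk : k < n
    · have hdvd1 : (X ^ n - 1 : R[X]) ∣ (X ^ (n-k) * w %ₘ (X ^ n - 1)) - X ^ (n-k) * w := by
        rw [modByMonic_eq_sub_mul_div _ (X ^ n - 1)]
        exact ⟨-((X ^ (n-k) * w) /ₘ (X^n-1)), by ring⟩
      have hdeg1 : (X ^ (n-k) * w %ₘ (X ^ n - 1)).degree < (n : ℕ) := by
        rw [← degree_m (R := R) hn]; exact degree_modByMonic_lt _ (monic_m hn)
      have hu := H (fun i : Fin n => (X ^ (n-k) * w %ₘ (X ^ n - 1)).coeff (i:ℕ))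
        ⟨X ^ (n-k), by rw [polG_coeffs hn hdeg1]; exact hdvd1⟩
      rw [inner_eq hn] at hu
      have e1 : EE n (polG (fun i : Fin n => (X ^ (n-k) * w %ₘ (X ^ n - 1)).coeff (i:ℕ))
          * (polG v).comp (X ^ (n - 1))) = EE n (X ^ (n-k) * s) := by
        apply EE_congr hn
        have heq : polG (fun i : Fin n => (X ^ (n-k) * w %ₘ (X ^ n - 1)).coeff (i:ℕ))
            * (polG v).comp (X ^ (n - 1)) - X ^ (n-k) * s
            = ((X ^ (n-k) * w %ₘ (X ^ n - 1)) - X ^ (n-k) * w) * (polG v).comp (X ^ (n-1)) := by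
          rw [polG_coeffs hn hdeg1, hs]; ring
        rw [heq]
        exact Dvd.dvd.mul_right hdvd1 _
      have e2 : EE n (X ^ (n-k) * s) = EE n (X ^ (n-k) * r) := by
        apply EE_congr hn
        have heq : X ^ (n-k) * s - X ^ (n-k) * r = X ^ (n-k) * (s - r) := by ring
        rw [heq]
        exact Dvd.dvd.mul_left hsr _
      rw [e1, e2, EE_shift hn hk hdeg] at hu
      exact hu
    · exact coeff_eq_zero_of_degree_lt
        (lt_of_lt_of_le hdeg (by exact_mod_cast Nat.le_of_not_lt hk))
  · rintro hdvd u ⟨μ, hu⟩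
    rw [inner_eq hn u v]
    have h1 : EE n (polG u * (polG v).comp (X ^ (n-1)))
        = EE n (μ * (w * (polG v).comp (X ^ (n-1)))) := by
      apply EE_congr hn
      have : polG u * (polG v).comp (X ^ (n-1)) - μ * (w * (polG v).comp (X ^ (n-1)))
          = (polG u - μ * w) * (polG v).comp (X ^ (n-1)) := by ring
      rw [this]
      exact Dvd.dvd.mul_right hu _
    rw [h1]
    exact EE_zero_of_dvd hn (Dvd.dvd.mul_left hdvd μ)

lemma reflect_sum {N : ℕ} {ι : Type*} (s : Finset ι) (f : ι → R[X]) :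
    reflect N (∑ i ∈ s, f i) = ∑ i ∈ s, reflect N (f i) := by
  ext k
  rw [coeff_reflect, Polynomial.finset_sum_coeff, Polynomial.finset_sum_coeff]
  exact Finset.sum_congr rfl fun i _ => (coeff_reflect N (f i) k).symm

lemma reflect_comp_congr {n : ℕ} (hn : 0 < n) {p : R[X]} {d : ℕ} (hd : p.natDegree ≤ d) :
    (X ^ n - 1 : R[X]) ∣ X ^ d * p.comp (X ^ (n - 1)) - reflect d p := by
  have hp := Polynomial.as_sum_range' p (d + 1) (Nat.lt_succ_of_le hd)
  have hmon : ∀ i : ℕ, (monomial i (p.coeff i) : R[X]) = C (p.coeff i) * X ^ i := by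
    intro i; rw [C_mul_X_pow_eq_monomial]
  rw [hp]
  have hcomp : (∑ i ∈ Finset.range (d+1), (monomial i (p.coeff i) : R[X])).comp (X ^ (n-1))
      = ∑ i ∈ Finset.range (d+1), C (p.coeff i) * X ^ (i * (n-1)) := by
    calc (∑ i ∈ Finset.range (d+1), (monomial i (p.coeff i) : R[X])).comp (X ^ (n-1))
        = ∑ i ∈ Finset.range (d+1), ((monomial i (p.coeff i) : R[X])).comp (X ^ (n-1)) := by
          rw [Polynomial.comp, Polynomial.eval₂_finset_sum]; rfl
      _ = _ := by
          refine Finset.sum_congr rfl fun i _ => ?_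
          rw [hmon, mul_comp, C_comp, X_pow_comp, ← pow_mul, Nat.mul_comm]
  have hrefl : reflect d (∑ i ∈ Finset.range (d+1), (monomial i (p.coeff i) : R[X]))
      = ∑ i ∈ Finset.range (d+1), C (p.coeff i) * X ^ (d - i) := by
    rw [reflect_sum]
    refine Finset.sum_congr rfl fun i hi => ?_
    rw [hmon, reflect_C_mul_X_pow, revAt_le (Nat.le_of_lt_succ (Finset.mem_range.mp hi))]
  rw [hcomp, hrefl, Finset.mul_sum, ← Finset.sum_sub_distrib]
  apply Finset.dvd_sum
  intro i hi
  have hi' : i ≤ d := Nat.le_of_lt_succ (Finset.mem_range.mp hi)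
  have heq : X ^ d * (C (p.coeff i) * X ^ (i * (n-1))) - C (p.coeff i) * X ^ (d - i)
      = C (p.coeff i) * (X ^ (d + i * (n-1)) - X ^ (d - i)) := by
    rw [mul_sub, pow_add]; ring
  rw [heq]
  apply Dvd.dvd.mul_left
  apply dvd_X_pow_sub_X_pow hn
  have h0 := AR0 hn i
  have h1 : d + i * (n - 1) = (d - i) + i * n := by omega
  rw [h1, Nat.add_mul_mod_self_right]

lemma comp_dvd_of_dvd {n : ℕ} (hn : 0 < n) {p : R[X]} (h : (X ^ n - 1 : R[X]) ∣ p) :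
    (X ^ n - 1 : R[X]) ∣ p.comp (X ^ (n - 1)) := by
  obtain ⟨c, rfl⟩ := h
  rw [mul_comp]
  have h1 : (X ^ n - 1 : R[X]) ∣ (X ^ n - 1 : R[X]).comp (X ^ (n-1)) := by
    rw [sub_comp, one_comp, X_pow_comp, ← pow_mul, Nat.mul_comm]
    exact dvd_X_pow_mul_sub n (n-1)
  exact Dvd.dvd.mul_right h1 _

lemma sq_pred_mod {n : ℕ} (hn : 0 < n) : ((n - 1) * (n - 1)) % n = 1 % n := by
  cases n with
  | zero => omega
  | succ m =>
    cases m with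
    | zero => simp
    | succ c =>
      have h1 : (c + 2) - 1 = c + 1 := rfl
      have h2 : (c + 1) * (c + 1) = (c + 2) * c + 1 := by ring
      rw [h1, h2, Nat.mul_add_mod]

lemma tautau {n : ℕ} (hn : 0 < n) (p : R[X]) :
    (X ^ n - 1 : R[X]) ∣ (p.comp (X ^ (n - 1))).comp (X ^ (n - 1)) - p := by
  set I : Ideal R[X] := Ideal.span {(X ^ n - 1 : R[X])} with hI
  have key : ∀ q : R[X], Ideal.Quotient.mk I ((q.comp (X ^ (n-1))).comp (X ^ (n-1)))
      = Ideal.Quotient.mk I q := by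
    have hhom : ∀ q : R[X], (eval₂RingHom (C : R →+* R[X]) (X ^ (n-1))) q = q.comp (X ^ (n-1)) := by
      intro q; rfl
    have hF : ((Ideal.Quotient.mk I).comp ((eval₂RingHom (C : R →+* R[X]) (X ^ (n-1))).comp
        (eval₂RingHom (C : R →+* R[X]) (X ^ (n-1))))) = (Ideal.Quotient.mk I) := by
      apply Polynomial.ringHom_ext
      · intro a
        simp
      · simp only [RingHom.comp_apply, coe_eval₂RingHom, eval₂_X]
        have hx : eval₂ (C : R →+* R[X]) (X ^ (n-1)) (X ^ (n-1)) = X ^ ((n-1)*(n-1)) := by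
          rw [eval₂_X_pow, ← pow_mul]
        rw [hx, Ideal.Quotient.mk_eq_mk_iff_sub_mem, Ideal.mem_span_singleton]
        have := dvd_X_pow_sub_X_pow (R := R) hn (sq_pred_mod hn)
        simpa using this
    intro q
    have := congrArg (fun φ => φ q) hF
    exact this
  have := key p
  rwa [Ideal.Quotient.mk_eq_mk_iff_sub_mem, hI, Ideal.mem_span_singleton] at this

lemma dvd_mul_congr {m a a' c : R[X]} (h : m ∣ a - a') : m ∣ a * c - a' * c := by
  have heq : a * c - a' * c = (a - a') * c := by ring
  rw [heq]; exact Dvd.dvd.mul_right h c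

lemma dvd_mul_iff_of_congr {m a a' c : R[X]} (h : m ∣ a - a') :
    m ∣ a * c ↔ m ∣ a' * c := by
  constructor
  · intro hd
    have := dvd_sub hd (dvd_mul_congr (c := c) h)
    simpa using this
  · intro hd
    have := dvd_add hd (dvd_mul_congr (c := c) h)
    simpa using this

lemma dvd_X_pow_mul_iff {n : ℕ} (hn : 0 < n) (e : ℕ) (s : R[X]) :
    (X ^ n - 1 : R[X]) ∣ X ^ e * s ↔ (X ^ n - 1 : R[X]) ∣ s := by
  constructor
  · intro h
    have h1 : (X ^ n - 1 : R[X]) ∣ X ^ (n * e - e) * (X ^ e * s) := Dvd.dvd.mul_left h _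
    have h2 : (X:R[X]) ^ (n * e - e) * (X ^ e * s) = X ^ (n * e) * s := by
      rw [← mul_assoc, ← pow_add]
      congr 2
      have : e ≤ n * e := Nat.le_mul_of_pos_left e hn
      omega
    rw [h2] at h1
    have h3 : (X ^ n - 1 : R[X]) ∣ (X ^ (n * e) - 1) * s :=
      Dvd.dvd.mul_right (dvd_X_pow_mul_sub n e) s
    have := dvd_sub h1 h3
    simpa [sub_mul] using this
  · intro h
    exact Dvd.dvd.mul_left h _

lemma transfer {n : ℕ} (hn : 0 < n) (w p : R[X]) :
    (X ^ n - 1 : R[X]) ∣ w * p.comp (X ^ (n - 1))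
    ↔ (X ^ n - 1 : R[X]) ∣ w.comp (X ^ (n - 1)) * p := by
  constructor
  · intro h
    have h2 := comp_dvd_of_dvd hn h
    rw [mul_comp] at h2
    have h3 := tautau hn p
    have h4 : (X^n-1:R[X]) ∣ w.comp (X^(n-1)) * ((p.comp (X^(n-1))).comp (X^(n-1)))
        - w.comp (X^(n-1)) * p := by
      have heq : w.comp (X^(n-1)) * ((p.comp (X^(n-1))).comp (X^(n-1))) - w.comp (X^(n-1)) * p
          = ((p.comp (X^(n-1))).comp (X^(n-1)) - p) * w.comp (X^(n-1)) := by ring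
      rw [heq]; exact Dvd.dvd.mul_right h3 _
    have := dvd_sub h2 h4
    simpa using this
  · intro h
    have h2 := comp_dvd_of_dvd hn h
    rw [mul_comp] at h2
    have h3 := tautau hn w
    have h4 : (X^n-1:R[X]) ∣ (w.comp (X^(n-1))).comp (X^(n-1)) * p.comp (X^(n-1))
        - w * p.comp (X^(n-1)) := by
      have heq : (w.comp (X^(n-1))).comp (X^(n-1)) * p.comp (X^(n-1)) - w * p.comp (X^(n-1))
          = ((w.comp (X^(n-1))).comp (X^(n-1)) - w) * p.comp (X^(n-1)) := by ring
      rw [heq]; exact Dvd.dvd.mul_right h3 _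
    have := dvd_sub h2 h4
    simpa using this

lemma reverse_X_pow_sub_one {n : ℕ} (hn : 0 < n) :
    (X ^ n - 1 : R[X]).reverse = 1 - X ^ n := by
  have hnd : (X ^ n - 1 : R[X]).natDegree = n := by
    have := natDegree_X_pow_sub_C (R := R) (n := n) (r := 1)
    simpa using this
  rw [Polynomial.reverse, hnd]
  have h1 : (X ^ n - 1 : R[X]) = X ^ n - C 1 * X ^ 0 := by simp
  rw [h1, Polynomial.reflect_sub, reflect_monomial, reflect_C_mul_X_pow,
    revAt_le (le_refl n), revAt_le (Nat.zero_le n)]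
  simp

end Generic

lemma two_eq_zero_Z2X : (2 : (ZMod 2)[X]) = 0 := by
  have h1 : ((2:ℕ) : (ZMod 2)[X]) = C ((2:ℕ) : ZMod 2) := (Polynomial.C_eq_natCast _).symm
  have h2 : ((2:ℕ) : ZMod 2) = 0 := by decide
  rw [h2] at h1
  simpa using h1

lemma rev_m2 {α : ℕ} (hα : 0 < α) : (X ^ α - 1 : (ZMod 2)[X]).reverse = X ^ α - 1 := by
  rw [reverse_X_pow_sub_one hα]
  linear_combination ((1 : (ZMod 2)[X]) - X ^ α) * two_eq_zero_Z2X

lemma z2step {α : ℕ} (hα : 0 < α) {b t : (ZMod 2)[X]} (hbm : b.Monic) (htm : t.Monic)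
    (hbt : b * t = X ^ α - 1) (p : (ZMod 2)[X]) :
    ((X ^ α - 1 : (ZMod 2)[X]) ∣ b * p.comp (X ^ (α - 1)))
    ↔ ∃ μ : (ZMod 2)[X], (X ^ α - 1 : (ZMod 2)[X]) ∣ p - μ * t.reverse := by
  have hfact : (X ^ α - 1 : (ZMod 2)[X]) = b.reverse * t.reverse := by
    calc (X ^ α - 1 : (ZMod 2)[X]) = (X ^ α - 1 : (ZMod 2)[X]).reverse := (rev_m2 hα).symm
      _ = (b * t).reverse := by rw [hbt]
      _ = b.reverse * t.reverse := Polynomial.reverse_mul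
          (by rw [hbm.leadingCoeff, htm.leadingCoeff]; simp)
  have hbrev_ne : b.reverse ≠ 0 := by
    rw [Ne, Polynomial.reverse_eq_zero]
    exact hbm.ne_zero
  rw [transfer hα]
  have L5b := reflect_comp_congr hα (le_refl b.natDegree)
  have step1 : (X ^ α - 1 : (ZMod 2)[X]) ∣ b.comp (X ^ (α-1)) * p
      ↔ (X ^ α - 1 : (ZMod 2)[X]) ∣ b.reverse * p := by
    rw [← dvd_X_pow_mul_iff hα b.natDegree (b.comp (X ^ (α-1)) * p), ← mul_assoc]
    exact dvd_mul_iff_of_congr L5b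
  rw [step1]
  constructor
  · intro hd
    obtain ⟨c, hc⟩ := hd
    rw [hfact, mul_assoc] at hc
    have hcancel : p = t.reverse * c := mul_left_cancel₀ hbrev_ne hc
    exact ⟨c, by rw [hcancel]; exact ⟨0, by ring⟩⟩
  · rintro ⟨μ, hd⟩
    have h1 : t.reverse ∣ p := by
      have h2 : t.reverse ∣ (X ^ α - 1 : (ZMod 2)[X]) := ⟨b.reverse, by rw [hfact]; ring⟩
      have h3 := h2.trans hd
      have h4 : t.reverse ∣ μ * t.reverse := Dvd.intro_left μ rfl
      have := dvd_add h3 h4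
      simpa using this
    obtain ⟨c, hc⟩ := h1
    exact ⟨c, by rw [hc, hfact]; ring⟩

lemma quotient_step {S : Type*} [CommRing S]
    (A B Hq U V P : S) (hUV : U * V = 1) (h4 : (4 : S) = 0) (hABH : A * B * Hq = 0)
    {a1 b1 : S} (h1 : a1 * A + b1 * (B * Hq) = 1)
    {a2 b2 : S} (h2 : a2 * B + b2 * (A * Hq) = 1)
    {a3 b3 : S} (h3 : a3 * Hq + b3 * (A * B) = 1)
    {c1 d1 : S} (hc1 : c1 * (A * (Hq + 2 * U)) + d1 * B = 1)
    {c2 d2 : S} (hc2 : c2 * A + d2 * Hq = 1)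
    {c3 d3 : S} (hc3 : c3 * (B * (Hq + 2)) + d3 * A = 1)
    {c4 d4 : S} (hc4 : c4 * B + d4 * Hq = 1)
    (htwo : ∀ r : S, 2 * r = 0 → ∃ w, r = 2 * w) :
    (A * (Hq + 2 * U)) * P = 0 ↔ ∃ M, P = M * (B * (Hq + 2)) := by
  constructor
  · intro hW
    set EA := b1 * (B * Hq) with hEAdef
    set EB := b2 * (A * Hq) with hEBdef
    set EH := b3 * (A * B) with hEHdef
    have hAEA : A * EA = 0 := by
      calc A * EA = b1 * (A * B * Hq) := by rw [hEAdef]; ring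
        _ = 0 := by rw [hABH, mul_zero]
    have hBEB : B * EB = 0 := by
      calc B * EB = b2 * (A * B * Hq) := by rw [hEBdef]; ring
        _ = 0 := by rw [hABH, mul_zero]
    have hHEH : Hq * EH = 0 := by
      calc Hq * EH = b3 * (A * B * Hq) := by rw [hEHdef]; ring
        _ = 0 := by rw [hABH, mul_zero]
    have hEH2 : EH * EH = EH := by
      have hEHeq : EH = 1 - a3 * Hq := by linear_combination h3
      calc EH * EH = EH * (1 - a3 * Hq) := by rw [← hEHeq]
        _ = EH - a3 * (Hq * EH) := by ring
        _ = EH := by rw [hHEH]; ring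
    have hEAB : EA * EB = 0 := by
      calc EA * EB = (b1 * b2 * Hq) * (A * B * Hq) := by rw [hEAdef, hEBdef]; ring
        _ = 0 := by rw [hABH, mul_zero]
    have hEAH : EA * EH = 0 := by
      calc EA * EH = (b1 * b3 * B) * (A * B * Hq) := by rw [hEAdef, hEHdef]; ring
        _ = 0 := by rw [hABH, mul_zero]
    have hEBH : EB * EH = 0 := by
      calc EB * EH = (b2 * b3 * A) * (A * B * Hq) := by rw [hEBdef, hEHdef]; ring
        _ = 0 := by rw [hABH, mul_zero]
    have hEABH : EA * EB * EH = 0 := by rw [hEAB, zero_mul]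
    have e1 : a1 * A = 1 - EA := by linear_combination h1
    have e2 : a2 * B = 1 - EB := by linear_combination h2
    have e3 : a3 * Hq = 1 - EH := by linear_combination h3
    have h0 : (1 - EA) * (1 - EB) * (1 - EH) = 0 := by
      calc (1 - EA) * (1 - EB) * (1 - EH) = (a1 * A) * (a2 * B) * (a3 * Hq) := by
            rw [e1, e2, e3]
        _ = (a1 * a2 * a3) * (A * B * Hq) := by ring
        _ = 0 := by rw [hABH, mul_zero]
    have hsum : EA + EB + EH = 1 := by
      linear_combination (-1 : S) * h0 + hEAB + hEAH + hEBH - hEABH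
    have hPEB : P * EB = 0 := by
      linear_combination (-(P * EB)) * hc1 + (c1 * EB) * hW + (d1 * P) * hBEB
    have h2UAPEH : 2 * (U * (A * (P * EH))) = 0 := by
      have hWPEH : (A * (Hq + 2 * U)) * P * EH = 0 := by rw [hW, zero_mul]
      linear_combination hWPEH - (A * P) * hHEH
    have h2APEH : 2 * (A * (P * EH)) = 0 := by
      linear_combination V * h2UAPEH - (2 * A * (P * EH)) * hUV
    have h2PEH : 2 * (P * EH) = 0 := by
      linear_combination (-(2 * (P * EH))) * hc2 + c2 * h2APEH + (2 * d2 * P) * hHEH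
    obtain ⟨R0, hR0⟩ := htwo (P * EH) h2PEH
    have hc4EH : c4 * B * EH = EH := by
      linear_combination EH * hc4 - d4 * hHEH
    have hMH : (c4 * (R0 * EH)) * (B * (Hq + 2)) = P * EH := by
      calc (c4 * (R0 * EH)) * (B * (Hq + 2)) = R0 * (Hq + 2) * (c4 * B * EH) := by ring
        _ = R0 * (Hq + 2) * EH := by rw [hc4EH]
        _ = R0 * (Hq * EH) + 2 * R0 * EH := by ring
        _ = (2 * R0) * EH := by rw [hHEH]; ring
        _ = (P * EH) * EH := by rw [← hR0]
        _ = P * (EH * EH) := by ring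
        _ = P * EH := by rw [hEH2]
    have hPEAeq : P * EA = c3 * (B * (Hq + 2)) * (P * EA) := by
      linear_combination (-(P * EA)) * hc3 + (d3 * P) * hAEA
    have hP : P = P * EA + P * EB + P * EH := by
      linear_combination (-P) * hsum
    exact ⟨c3 * (P * EA) + c4 * (R0 * EH), by
      linear_combination hP + hPEAeq + hPEB - hMH⟩
  · rintro ⟨M, rfl⟩
    linear_combination (M * (Hq + 2 + 2 * U)) * hABH + (M * (A * B * U)) * h4

lemma red42_apply (p : (ZMod 4)[X]) :
    red42 p = p.map (ZMod.castHom (show 2 ∣ 4 by norm_num) (ZMod 2)) := rfl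

lemma two_eq_C_Z4X : (2 : (ZMod 4)[X]) = C 2 := by
  have h1 : ((2:ℕ) : (ZMod 4)[X]) = C ((2:ℕ) : ZMod 4) := (Polynomial.C_eq_natCast _).symm
  simpa using h1

lemma four_eq_zero_Z4X : (4 : (ZMod 4)[X]) = 0 := by
  have h1 : ((4:ℕ) : (ZMod 4)[X]) = C ((4:ℕ) : ZMod 4) := (Polynomial.C_eq_natCast _).symm
  have h2 : ((4:ℕ) : ZMod 4) = 0 := by decide
  rw [h2] at h1
  simpa using h1

lemma red42_surj : Function.Surjective red42 :=
  Polynomial.map_surjective _ (ZMod.ringHom_surjective _)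

lemma z4_elt_two_mul (c : ZMod 4) (hc : ZMod.castHom (show 2 ∣ 4 by norm_num) (ZMod 2) c = 0) :
    c = 2 * (if c = 2 then 1 else 0) := by
  revert hc
  revert c
  decide

lemma z4_elt_red_zero (c : ZMod 4) (hc : 2 * c = 0) :
    ZMod.castHom (show 2 ∣ 4 by norm_num) (ZMod 2) c = 0 := by
  revert hc; revert c; decide

lemma eq_two_mul_of_red42_zero {s : (ZMod 4)[X]} (hs : red42 s = 0) :
    ∃ w : (ZMod 4)[X], s = 2 * w := by
  refine ⟨∑ i ∈ s.support, C (if s.coeff i = 2 then 1 else 0) * X ^ i, ?_⟩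
  ext k
  rw [two_eq_C_Z4X, coeff_C_mul, Polynomial.finset_sum_coeff]
  simp only [coeff_C_mul, coeff_X_pow, mul_ite, mul_one, mul_zero]
  rw [Finset.sum_ite_eq (s.support) k (fun i => if s.coeff i = 2 then 1 else 0)]
  by_cases hk : k ∈ s.support
  · simp only [hk, if_true]
    have hck : ZMod.castHom (show 2 ∣ 4 by norm_num) (ZMod 2) (s.coeff k) = 0 := by
      have := congrArg (fun q => Polynomial.coeff q k) hs
      simpa [red42_apply, Polynomial.coeff_map] using this
    exact z4_elt_two_mul _ hck
  · simp only [hk, if_false, mul_zero]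
    exact Polynomial.notMem_support_iff.mp hk

lemma red42_zero_of_two_torsion {s : (ZMod 4)[X]} (hs : 2 * s = 0) : red42 s = 0 := by
  ext k
  rw [red42_apply, Polynomial.coeff_map]
  have h2 : 2 * s.coeff k = 0 := by
    have := congrArg (fun q => Polynomial.coeff q k) hs
    simpa [two_eq_C_Z4X, coeff_C_mul] using this
  simpa using z4_elt_red_zero _ h2

lemma red42_m (β : ℕ) : red42 (X ^ β - 1) = X ^ β - 1 := by
  rw [red42_apply]
  simp [Polynomial.map_sub, Polynomial.map_pow]

lemma two_torsion_lift {β : ℕ} (hβ : 0 < β) {s : (ZMod 4)[X]}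
    (hdvd : (X ^ β - 1 : (ZMod 4)[X]) ∣ 2 * s) :
    ∃ w q : (ZMod 4)[X], s = 2 * w + (X ^ β - 1) * q := by
  obtain ⟨c, hc⟩ := hdvd
  have hred : red42 ((X ^ β - 1 : (ZMod 4)[X])) * red42 c = 0 := by
    rw [← map_mul, ← hc, map_mul]
    have : red42 2 = 0 := by
      rw [two_eq_C_Z4X, red42_apply]
      simp [Polynomial.map_C]
      decide
    rw [this, zero_mul]
  rw [red42_m] at hred
  have hmne : (X ^ β - 1 : (ZMod 2)[X]) ≠ 0 := (monic_m hβ).ne_zero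
  have hcred : red42 c = 0 := by
    rcases mul_eq_zero.mp hred with h | h
    · exact absurd h hmne
    · exact h
  obtain ⟨c', hc'⟩ := eq_two_mul_of_red42_zero hcred
  have h2t : 2 * (s - (X ^ β - 1) * c') = 0 := by
    have : 2 * s = (X ^ β - 1) * (2 * c') := by rw [← hc', ← hc]
    linear_combination this
  obtain ⟨w, hw⟩ := eq_two_mul_of_red42_zero (red42_zero_of_two_torsion h2t)
  exact ⟨w, c', by linear_combination hw⟩

lemma isCoprime_of_red42 {p q : (ZMod 4)[X]} (h : IsCoprime (red42 p) (red42 q)) :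
    IsCoprime p q := by
  obtain ⟨a2, b2, hab⟩ := h
  obtain ⟨a, rfl⟩ := red42_surj a2
  obtain ⟨b, rfl⟩ := red42_surj b2
  have hz : red42 (a * p + b * q - 1) = 0 := by
    rw [map_sub, map_add, map_mul, map_mul, map_one, hab, sub_self]
  obtain ⟨w, hw⟩ := eq_two_mul_of_red42_zero hz
  refine ⟨(1 - 2 * w) * a, (1 - 2 * w) * b, ?_⟩
  have h1 : a * p + b * q = 1 + 2 * w := by linear_combination hw
  have h4 := four_eq_zero_Z4X
  calc (1 - 2*w) * a * p + (1 - 2*w) * b * q = (1 - 2*w) * (a * p + b * q) := by ring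
    _ = (1 - 2*w) * (1 + 2*w) := by rw [h1]
    _ = 1 - 4 * (w * w) := by ring
    _ = 1 := by rw [h4]; ring

lemma red42_reverse {p : (ZMod 4)[X]} (hp : p.Monic) :
    red42 p.reverse = (red42 p).reverse := by
  rw [red42_apply, red42_apply, Polynomial.reverse, Polynomial.reverse,
    ← Polynomial.reflect_map, (hp.natDegree_map _)]

lemma z4full {β : ℕ} (hβ : Odd β) {f g h : (ZMod 4)[X]} (hf : f.Monic) (hg : g.Monic)
    (hh : h.Monic) (hfac : f * g * h = X ^ β - 1) (p : (ZMod 4)[X]) :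
    ((X ^ β - 1 : (ZMod 4)[X]) ∣ (f * h + 2 * f) * p.comp (X ^ (β - 1)))
    ↔ ∃ μ : (ZMod 4)[X],
      (X ^ β - 1 : (ZMod 4)[X]) ∣ p - μ * (g.reverse * h.reverse + 2 * g.reverse) := by
  haveI : Nontrivial (ZMod 4) := ⟨⟨0, 1, by decide⟩⟩
  have hβ0 : 0 < β := hβ.pos
  set k := h.natDegree with hk
  set w1 : (ZMod 4)[X] := f.reverse * h.reverse + C 2 * X ^ k * f.reverse with hw1
  rw [transfer hβ0]
  -- congruence step
  have L5f := reflect_comp_congr hβ0 (le_refl f.natDegree)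
  have L5h := reflect_comp_congr hβ0 (le_refl h.natDegree)
  have hrevf : reflect f.natDegree f = f.reverse := rfl
  have hrevh : reflect h.natDegree h = h.reverse := rfl
  rw [hrevf] at L5f
  rw [hrevh] at L5h
  have hcomp : (f * h + 2 * f).comp (X ^ (β-1))
      = f.comp (X ^ (β-1)) * h.comp (X ^ (β-1)) + C 2 * f.comp (X ^ (β-1)) := by
    rw [add_comp, mul_comp, two_eq_C_Z4X, mul_comp, C_comp]
  have hcong : (X ^ β - 1 : (ZMod 4)[X]) ∣
      X ^ (f.natDegree + k) * ((f * h + 2 * f).comp (X ^ (β-1))) - w1 := by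
    rw [hcomp, hw1]
    have hiden : X ^ (f.natDegree + k) *
        (f.comp (X ^ (β-1)) * h.comp (X ^ (β-1)) + C 2 * f.comp (X ^ (β-1)))
        - (f.reverse * h.reverse + C 2 * X ^ k * f.reverse)
        = (X ^ f.natDegree * f.comp (X ^ (β-1)) - f.reverse) * (X ^ k * h.comp (X ^ (β-1)))
          + f.reverse * (X ^ k * h.comp (X ^ (β-1)) - h.reverse)
          + C 2 * X ^ k * (X ^ f.natDegree * f.comp (X ^ (β-1)) - f.reverse) := by
      rw [pow_add]; ring
    rw [hiden]
    exact dvd_add (dvd_add (L5f.mul_right _) (L5h.mul_left _)) (L5f.mul_left _)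
  have step2 : ((X ^ β - 1 : (ZMod 4)[X]) ∣ (f * h + 2 * f).comp (X ^ (β-1)) * p)
      ↔ ((X ^ β - 1 : (ZMod 4)[X]) ∣ w1 * p) := by
    rw [← dvd_X_pow_mul_iff hβ0 (f.natDegree + k) ((f * h + 2 * f).comp (X ^ (β-1)) * p),
      ← mul_assoc]
    exact dvd_mul_iff_of_congr hcong
  rw [step2]
  -- quotient ring setup
  set I : Ideal (ZMod 4)[X] := Ideal.span {(X ^ β - 1 : (ZMod 4)[X])} with hI
  set π : (ZMod 4)[X] →+* (ZMod 4)[X] ⧸ I := Ideal.Quotient.mk I with hπ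
  have hzero : ∀ a : (ZMod 4)[X], π a = 0 ↔ (X ^ β - 1 : (ZMod 4)[X]) ∣ a := by
    intro a
    rw [hπ, Ideal.Quotient.eq_zero_iff_mem, hI, Ideal.mem_span_singleton]
  have hXb : π (X ^ β : (ZMod 4)[X]) = 1 := by
    have : π ((X ^ β : (ZMod 4)[X]) - 1) = 0 := (hzero _).mpr dvd_rfl
    rw [map_sub, map_one] at this
    linear_combination this
  have hC2 : π (C 2 : (ZMod 4)[X]) = 2 := by
    rw [← two_eq_C_Z4X, map_ofNat]
  have h4Q : (4 : (ZMod 4)[X] ⧸ I) = 0 := by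
    rw [← map_ofNat π 4, four_eq_zero_Z4X, map_zero]
  set A := π f.reverse with hA
  set B := π g.reverse with hB
  set Hq := π h.reverse with hHq
  set U := π (X ^ k : (ZMod 4)[X]) with hU
  set V := π ((X ^ (β-1)) ^ k : (ZMod 4)[X]) with hV
  have hUV : U * V = 1 := by
    rw [hU, hV, ← map_mul, ← pow_mul, ← pow_add]
    have harith : k + (β - 1) * k = β * k := by
      cases β with
      | zero => omega
      | succ m =>
        have : m + 1 - 1 = m := rfl
        rw [this, Nat.succ_mul, Nat.add_comm (m * k) k]
    rw [harith, pow_mul, map_pow, hXb, one_pow]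
  -- product of reverses
  have hrevprod : f.reverse * g.reverse * h.reverse = 1 - X ^ β := by
    have h1 : (f * g).reverse = f.reverse * g.reverse :=
      Polynomial.reverse_mul (by rw [hf.leadingCoeff, hg.leadingCoeff]; simp)
    have h2 : (f * g * h).reverse = (f * g).reverse * h.reverse :=
      Polynomial.reverse_mul (by rw [(hf.mul hg).leadingCoeff, hh.leadingCoeff]; simp)
    calc f.reverse * g.reverse * h.reverse = (f * g * h).reverse := by rw [h2, h1]
      _ = (X ^ β - 1 : (ZMod 4)[X]).reverse := by rw [hfac]
      _ = 1 - X ^ β := reverse_X_pow_sub_one hβ0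
  have hABH : A * B * Hq = 0 := by
    rw [hA, hB, hHq, ← map_mul, ← map_mul, hrevprod, map_sub, map_one, hXb, sub_self]
  -- coprimality over ZMod 2
  have hf2 : (red42 f).Monic := hf.map _
  have hg2 : (red42 g).Monic := hg.map _
  have hh2 : (red42 h).Monic := hh.map _
  have hprod2 : red42 f * red42 g * red42 h = X ^ β - 1 := by
    rw [← map_mul, ← map_mul, hfac, red42_m]
  have hrev2 : (red42 f).reverse * (red42 g).reverse * (red42 h).reverse
      = (X ^ β - 1 : (ZMod 2)[X]) := by
    have h1 : (red42 f * red42 g).reverse = (red42 f).reverse * (red42 g).reverse :=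
      Polynomial.reverse_mul (by rw [hf2.leadingCoeff, hg2.leadingCoeff]; simp)
    have h2 : (red42 f * red42 g * red42 h).reverse
        = (red42 f * red42 g).reverse * (red42 h).reverse :=
      Polynomial.reverse_mul (by rw [(hf2.mul hg2).leadingCoeff, hh2.leadingCoeff]; simp)
    calc (red42 f).reverse * (red42 g).reverse * (red42 h).reverse
        = (red42 f * red42 g * red42 h).reverse := by rw [h2, h1]
      _ = (X ^ β - 1 : (ZMod 2)[X]).reverse := by rw [hprod2]
      _ = X ^ β - 1 := rev_m2 hβ0
  have hsep : (X ^ β - 1 : (ZMod 2)[X]).Separable := by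
    rw [Polynomial.X_pow_sub_one_separable_iff]
    rw [Ne, ZMod.natCast_eq_zero_iff]
    intro hd
    rw [Nat.odd_iff] at hβ
    omega
  have hsepFGH : ((red42 f).reverse * (red42 g).reverse * (red42 h).reverse).Separable := by
    rw [hrev2]; exact hsep
  have cpFG : IsCoprime (red42 f).reverse (red42 g).reverse :=
    hsepFGH.of_mul_left.isCoprime
  have cpFH : IsCoprime (red42 f).reverse (red42 h).reverse := by
    have : ((red42 f).reverse * (red42 h).reverse * (red42 g).reverse).Separable := by
      have heq : (red42 f).reverse * (red42 h).reverse * (red42 g).reverse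
          = (red42 f).reverse * (red42 g).reverse * (red42 h).reverse := by ring
      rw [heq]; exact hsepFGH
    exact this.of_mul_left.isCoprime
  have cpGH : IsCoprime (red42 g).reverse (red42 h).reverse := by
    have : ((red42 g).reverse * (red42 h).reverse * (red42 f).reverse).Separable := by
      have heq : (red42 g).reverse * (red42 h).reverse * (red42 f).reverse
          = (red42 f).reverse * (red42 g).reverse * (red42 h).reverse := by ring
      rw [heq]; exact hsepFGH
    exact this.of_mul_left.isCoprime
  have hredf : red42 f.reverse = (red42 f).reverse := red42_reverse hf
  have hredg : red42 g.reverse = (red42 g).reverse := red42_reverse hg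
  have hredh : red42 h.reverse = (red42 h).reverse := red42_reverse hh
  have hredC2 : red42 (C 2 : (ZMod 4)[X]) = 0 := by
    rw [red42_apply, Polynomial.map_C]
    have : (ZMod.castHom (show 2 ∣ 4 by norm_num) (ZMod 2)) 2 = 0 := by decide
    rw [this, map_zero]
  have hredX : red42 (X : (ZMod 4)[X]) = X := by
    rw [red42_apply, Polynomial.map_X]
  -- lifted coprime facts
  have cp1 : IsCoprime f.reverse (g.reverse * h.reverse) := by
    apply isCoprime_of_red42
    rw [map_mul, hredf, hredg, hredh]
    exact cpFG.mul_right cpFH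
  have cp2 : IsCoprime g.reverse (f.reverse * h.reverse) := by
    apply isCoprime_of_red42
    rw [map_mul, hredf, hredg, hredh]
    exact cpFG.symm.mul_right cpGH
  have cp3 : IsCoprime h.reverse (f.reverse * g.reverse) := by
    apply isCoprime_of_red42
    rw [map_mul, hredf, hredg, hredh]
    exact cpFH.symm.mul_right cpGH.symm
  have cp4 : IsCoprime (f.reverse * (h.reverse + C 2 * X ^ k)) g.reverse := by
    apply isCoprime_of_red42
    rw [map_mul, map_add, map_mul, map_pow, hredf, hredg, hredh, hredC2, hredX]
    rw [zero_mul, add_zero]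
    exact IsCoprime.mul_left cpFG cpGH.symm
  have cp5 : IsCoprime f.reverse h.reverse := by
    apply isCoprime_of_red42
    rw [hredf, hredh]; exact cpFH
  have cp6 : IsCoprime (g.reverse * (h.reverse + C 2)) f.reverse := by
    apply isCoprime_of_red42
    rw [map_mul, map_add, hredf, hredg, hredh, hredC2, add_zero]
    exact IsCoprime.mul_left cpFG.symm cpFH.symm
  have cp7 : IsCoprime g.reverse h.reverse := by
    apply isCoprime_of_red42
    rw [hredg, hredh]; exact cpGH
  -- Bezout data in the quotient
  obtain ⟨x1, y1, hxy1⟩ := cp1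
  have h1Q : (π x1) * A + (π y1) * (B * Hq) = 1 := by
    have := congrArg π hxy1
    simp only [map_add, map_mul, map_one] at this
    rw [hA, hB, hHq]; linear_combination this
  obtain ⟨x2, y2, hxy2⟩ := cp2
  have h2Q : (π x2) * B + (π y2) * (A * Hq) = 1 := by
    have := congrArg π hxy2
    simp only [map_add, map_mul, map_one] at this
    rw [hA, hB, hHq]; linear_combination this
  obtain ⟨x3, y3, hxy3⟩ := cp3
  have h3Q : (π x3) * Hq + (π y3) * (A * B) = 1 := by
    have := congrArg π hxy3
    simp only [map_add, map_mul, map_one] at this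
    rw [hA, hB, hHq]; linear_combination this
  obtain ⟨x4, y4, hxy4⟩ := cp4
  have h4Qb : (π x4) * (A * (Hq + 2 * U)) + (π y4) * B = 1 := by
    have := congrArg π hxy4
    simp only [map_add, map_mul, map_one] at this
    rw [hC2] at this
    rw [hA, hB, hHq, hU]; linear_combination this
  obtain ⟨x5, y5, hxy5⟩ := cp5
  have h5Q : (π x5) * A + (π y5) * Hq = 1 := by
    have := congrArg π hxy5
    simp only [map_add, map_mul, map_one] at this
    rw [hA, hHq]; linear_combination this
  obtain ⟨x6, y6, hxy6⟩ := cp6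
  have h6Q : (π x6) * (B * (Hq + 2)) + (π y6) * A = 1 := by
    have := congrArg π hxy6
    simp only [map_add, map_mul, map_one] at this
    rw [hC2] at this
    rw [hA, hB, hHq]; linear_combination this
  obtain ⟨x7, y7, hxy7⟩ := cp7
  have h7Q : (π x7) * B + (π y7) * Hq = 1 := by
    have := congrArg π hxy7
    simp only [map_add, map_mul, map_one] at this
    rw [hB, hHq]; linear_combination this
  -- two-torsion lifting in the quotient
  have htwoQ : ∀ r : (ZMod 4)[X] ⧸ I, 2 * r = 0 → ∃ w, r = 2 * w := by
    intro r hr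
    obtain ⟨s, rfl⟩ := Ideal.Quotient.mk_surjective r
    have hs : π (2 * s) = 0 := by
      rw [map_mul, map_ofNat]
      exact hr
    obtain ⟨w, q, hwq⟩ := two_torsion_lift hβ0 ((hzero _).mp hs)
    refine ⟨π w, ?_⟩
    have : π s = π (2 * w + (X ^ β - 1) * q) := by rw [← hwq]
    rw [map_add, map_mul, map_mul, map_ofNat, (hzero _).mpr (dvd_refl _), zero_mul,
      add_zero] at this
    exact this
  -- main equivalence via quotient_step
  have hmain := quotient_step A B Hq U V (π p) hUV h4Q hABH h1Q h2Q h3Q h4Qb h5Q h6Q h7Q htwoQ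
  have hπw1 : π w1 = A * (Hq + 2 * U) := by
    rw [hw1, map_add, map_mul, map_mul, map_mul, hC2, hA, hHq, hU]
    ring
  constructor
  · intro hd
    have hz : (A * (Hq + 2 * U)) * (π p) = 0 := by
      rw [← hπw1, ← map_mul]
      exact (hzero _).mpr hd
    obtain ⟨M, hM⟩ := hmain.mp hz
    obtain ⟨μ, rfl⟩ := Ideal.Quotient.mk_surjective M
    refine ⟨μ, ?_⟩
    rw [← hzero]
    have hT : π (g.reverse * h.reverse + 2 * g.reverse) = B * (Hq + 2) := by
      rw [map_add, map_mul, map_mul, map_ofNat, hB, hHq]; ring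
    rw [map_sub, map_mul, hT, hM]
    ring
  · rintro ⟨μ, hd⟩
    have hz : π p = (π μ) * (B * (Hq + 2)) := by
      have h0 : π (p - μ * (g.reverse * h.reverse + 2 * g.reverse)) = 0 := (hzero _).mpr hd
      have hT : π (g.reverse * h.reverse + 2 * g.reverse) = B * (Hq + 2) := by
        rw [map_add, map_mul, map_mul, map_ofNat, hB, hHq]; ring
      rw [map_sub, map_mul, hT, sub_eq_zero] at h0
      exact h0
    have := hmain.mpr ⟨π μ, hz⟩
    rw [← hπw1, ← map_mul, hzero] at this
    exact this

lemma polyOf2_eq {α : ℕ} (u : Fin α → ZMod 2) : polyOf2 u = polG u := rfl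

lemma polyOf4_eq {β : ℕ} (u : Fin β → ZMod 4) : polyOf4 u = polG u := rfl

noncomputable def j24 : ZMod 2 →+ ZMod 4 where
  toFun := fun a => 2 * ((a.val : ℕ) : ZMod 4)
  map_zero' := by decide
  map_add' := by decide

lemma j24_mul (a b : ZMod 2) :
    j24 (a * b) = 2 * (((a.val : ℕ) : ZMod 4) * ((b.val : ℕ) : ZMod 4)) := by
  revert a b; decide

lemma j24_zero (a : ZMod 2) (ha : j24 a = 0) : a = 0 := by
  revert ha; revert a; decide

lemma sum2_eq {α : ℕ} (u w : Fin α → ZMod 2) :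
    2 * ∑ i, (((u i).val : ZMod 4) * ((w i).val : ZMod 4)) = j24 (∑ i, u i * w i) := by
  rw [map_sum, Finset.mul_sum]
  exact Finset.sum_congr rfl fun i _ => (j24_mul (u i) (w i)).symm


/-- If `C = ⟨(b|0), (0|fh+2f)⟩` is a separable `Z₂Z₄`-additive cyclic code
with `fgh = x^β-1`, `β` odd, then
`C⊥ = ⟨((x^α-1)/b* | 0), (0 | g*h* + 2g*)⟩`. -/
theorem dual_of_separable (α β : ℕ) (hα : 0 < α) (hβ : Odd β)
    (f g h : Polynomial (ZMod 4)) (hf : f.Monic) (hg : g.Monic) (hh : h.Monic)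
    (hfac : f * g * h = X ^ β - 1)
    (b : Polynomial (ZMod 2)) (hbm : b.Monic) (hb : b ∣ X ^ α - 1) :
    ∀ v : (Fin α → ZMod 2) × (Fin β → ZMod 4),
      (∀ u : (Fin α → ZMod 2) × (Fin β → ZMod 4),
        memC b 0 (f * h + 2 * f) u → innerZ2Z4 u v = 0) ↔
      memC ((X ^ α - 1) / b.reverse) 0
        (g.reverse * h.reverse + 2 * g.reverse) v := by
  intro v
  haveI : Nontrivial (ZMod 4) := ⟨⟨0, 1, by decide⟩⟩
  have hβ0 : 0 < β := hβ.pos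
  obtain ⟨t, ht⟩ := hb
  have hmα : (X ^ α - 1 : (ZMod 2)[X]).Monic := monic_m hα
  have htm : t.Monic := hbm.of_mul_monic_left (by rw [← ht]; exact hmα)
  have hbt : b * t = X ^ α - 1 := ht.symm
  have hfactrev : (X ^ α - 1 : (ZMod 2)[X]) = b.reverse * t.reverse := by
    calc (X ^ α - 1 : (ZMod 2)[X]) = (X ^ α - 1 : (ZMod 2)[X]).reverse := (rev_m2 hα).symm
      _ = (b * t).reverse := by rw [hbt]
      _ = b.reverse * t.reverse := Polynomial.reverse_mul
          (by rw [hbm.leadingCoeff, htm.leadingCoeff]; simp)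
  have hbrev_ne : b.reverse ≠ 0 := by
    rw [Ne, Polynomial.reverse_eq_zero]; exact hbm.ne_zero
  have hdivq : (X ^ α - 1 : (ZMod 2)[X]) / b.reverse = t.reverse := by
    rw [hfactrev]
    exact mul_div_cancel_left₀ _ hbrev_ne
  have hsplit : (∀ u : (Fin α → ZMod 2) × (Fin β → ZMod 4),
      memC b 0 (f * h + 2 * f) u → innerZ2Z4 u v = 0) ↔
      ((∀ u1 : Fin α → ZMod 2, (∃ μ : (ZMod 2)[X],
          (X ^ α - 1 : (ZMod 2)[X]) ∣ polG u1 - μ * b) → ∑ i, u1 i * v.1 i = 0) ∧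
       (∀ u2 : Fin β → ZMod 4, (∃ μ : (ZMod 4)[X],
          (X ^ β - 1 : (ZMod 4)[X]) ∣ polG u2 - μ * (f * h + 2 * f)) →
          ∑ j, u2 j * v.2 j = 0)) := by
    constructor
    · intro H
      constructor
      · rintro u1 ⟨μ, hμ⟩
        obtain ⟨lam, hlam⟩ := red42_surj μ
        have hmem : memC b 0 (f * h + 2 * f) (u1, (0 : Fin β → ZMod 4)) := by
          refine ⟨lam, 0, ?_, ?_⟩
          · rw [hlam]
            simpa [polyOf2_eq] using hμ
          · have : polyOf4 (0 : Fin β → ZMod 4) = 0 := by simp [polyOf4]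
            rw [this]
            simp
        have hH := H (u1, (0 : Fin β → ZMod 4)) hmem
        unfold innerZ2Z4 at hH
        simp only [Prod.fst, Prod.snd, Pi.zero_apply, zero_mul, Finset.sum_const_zero, add_zero] at hH
        rw [sum2_eq] at hH
        exact j24_zero _ hH
      · rintro u2 ⟨μ, hμ⟩
        have hmem : memC b 0 (f * h + 2 * f) ((0 : Fin α → ZMod 2), u2) := by
          refine ⟨0, μ, ?_, ?_⟩
          · have : polyOf2 (0 : Fin α → ZMod 2) = 0 := by simp [polyOf2]
            rw [this]
            simp
          · simpa [polyOf4_eq] using hμ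
        have hH := H ((0 : Fin α → ZMod 2), u2) hmem
        unfold innerZ2Z4 at hH
        simpa using hH
    · rintro ⟨H2, H4⟩ u ⟨lam, mu, hu1, hu2⟩
      have hs2 : ∑ i, u.1 i * v.1 i = 0 := by
        apply H2 u.1
        refine ⟨red42 lam, ?_⟩
        simpa [polyOf2_eq] using hu1
      have hs4 : ∑ j, u.2 j * v.2 j = 0 := by
        apply H4 u.2
        exact ⟨mu, by simpa [polyOf4_eq] using hu2⟩
      unfold innerZ2Z4
      rw [sum2_eq, hs2, hs4, map_zero, add_zero]
  have hrhs : memC ((X ^ α - 1) / b.reverse) 0 (g.reverse * h.reverse + 2 * g.reverse) v ↔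
      ((∃ μ : (ZMod 2)[X], (X ^ α - 1 : (ZMod 2)[X]) ∣ polG v.1 - μ * t.reverse) ∧
       (∃ μ : (ZMod 4)[X], (X ^ β - 1 : (ZMod 4)[X]) ∣
          polG v.2 - μ * (g.reverse * h.reverse + 2 * g.reverse))) := by
    constructor
    · rintro ⟨lam, mu, h1, h2⟩
      constructor
      · refine ⟨red42 lam, ?_⟩
        rw [← hdivq]
        simpa [polyOf2_eq] using h1
      · exact ⟨mu, by simpa [polyOf4_eq] using h2⟩
    · rintro ⟨⟨μ, h1⟩, ⟨mu, h2⟩⟩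
      obtain ⟨lam, hlam⟩ := red42_surj μ
      refine ⟨lam, mu, ?_, by simpa [polyOf4_eq] using h2⟩
      rw [hlam, hdivq]
      simpa [polyOf2_eq] using h1
  rw [hsplit, hrhs]
  have e2 := (keyLemma hα b v.1).trans (z2step hα hbm htm hbt (polG v.1))
  have e4 := (keyLemma hβ0 (f * h + 2 * f) v.2).trans (z4full hβ hf hg hh hfac (polG v.2))
  exact and_congr e2 e4
end

section
/- Let C ⊆ Z_2^α × Z_4^β be a Z_2Z_4-additive code of type (α,β;γ,δ;κ) with minimum Hamming distance d of its Gray image (or Lee distance). Then (d-1)/2 ≤ α/2 + β - γ/2 - δ. -/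
/-- The quaternary Gray map `φ₄`. -/
def phi4 (x : ZMod 4) : ZMod 2 × ZMod 2 :=
  match x.val with
  | 0 => (0, 0)
  | 1 => (0, 1)
  | 2 => (1, 1)
  | _ => (1, 0)

/-- The Gray map `φ : Z₂^α × Z₄^β → Z₂^(α+2β)`. -/
def grayMap {α β : ℕ} (u : (Fin α → ZMod 2) × (Fin β → ZMod 4)) :
    (Fin α ⊕ Fin β ⊕ Fin β) → ZMod 2 :=
  fun i => match i with
  | Sum.inl i => u.1 i
  | Sum.inr (Sum.inl j) => (phi4 (u.2 j)).1
  | Sum.inr (Sum.inr j) => (phi4 (u.2 j)).2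

lemma phi4_inj : Function.Injective phi4 := by decide

lemma grayMap_inj {α β : ℕ} :
    Function.Injective (grayMap (α := α) (β := β)) := by
  intro u v h
  refine Prod.ext (funext fun i => congrFun h (Sum.inl i)) (funext fun j => phi4_inj ?_)
  exact Prod.ext (congrFun h (Sum.inr (Sum.inl j))) (congrFun h (Sum.inr (Sum.inr j)))

/-- The Singleton bound for `Z₂Z₄`-additive codes: if `C` has type
`(α,β;γ,δ;κ)` and `d` is the minimum Hamming distance of its Gray image,
then `(d-1)/2 ≤ α/2 + β - γ/2 - δ`. -/
theorem singleton_bound_Z2Z4 (α β γ δ : ℕ) (d : ℕ)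
    (C : AddSubgroup ((Fin α → ZMod 2) × (Fin β → ZMod 4)))
    (htype : Nonempty (C ≃+ (Fin γ → ZMod 2) × (Fin δ → ZMod 4)))
    (hd : IsLeast {n : ℕ | ∃ u ∈ C, ∃ v ∈ C, grayMap u ≠ grayMap v ∧
        n = hammingDist (grayMap u) (grayMap v)} d) :
    ((d : ℚ) - 1) / 2 ≤ (α : ℚ) / 2 + β - (γ : ℚ) / 2 - δ := by
  classical
  obtain ⟨⟨u, hu, v, hv, hne, hdeq⟩, hlb⟩ := hd
  have hd1 : 1 ≤ d := by
    rw [hdeq]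
    exact Nat.one_le_iff_ne_zero.mpr (by simpa [hammingDist_eq_zero] using hne)
  set ι := (Fin α ⊕ Fin β ⊕ Fin β) with hι
  have hn : Fintype.card ι = α + 2 * β := by
    simp [hι, Fintype.card_sum]; ring
  have hdn : d ≤ α + 2 * β := by
    rw [hdeq, ← hn]; exact hammingDist_le_card_fintype
  obtain ⟨D, -, hDcard⟩ :=
    Finset.exists_subset_card_eq (s := (Finset.univ : Finset ι)) (n := d - 1)
      (by rw [Finset.card_univ, hn]; omega)
  -- project onto complement of D
  have hinj : Function.Injective
      (fun c : C => (fun i : {x : ι // x ∈ Dᶜ} => grayMap c.1 i.1)) := by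
    intro c1 c2 h
    have hgray : grayMap c1.1 = grayMap c2.1 := by
      by_contra hne2
      have hmem : hammingDist (grayMap c1.1) (grayMap c2.1) ∈
          {n : ℕ | ∃ u ∈ C, ∃ v ∈ C, grayMap u ≠ grayMap v ∧
            n = hammingDist (grayMap u) (grayMap v)} :=
        ⟨c1.1, c1.2, c2.1, c2.2, hne2, rfl⟩
      have hles : d ≤ hammingDist (grayMap c1.1) (grayMap c2.1) := hlb hmem
      have hsub : ({i | grayMap c1.1 i ≠ grayMap c2.1 i} : Finset ι) ⊆ D := by
        intro i hi
        simp only [Finset.mem_filter] at hi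
        by_contra hiD
        exact hi.2 (congrFun h ⟨i, Finset.mem_compl.mpr hiD⟩)
      have : hammingDist (grayMap c1.1) (grayMap c2.1) ≤ D.card :=
        Finset.card_le_card hsub
      omega
    exact Subtype.ext (grayMap_inj hgray)
  have hcard1 : Nat.card C = 2 ^ (γ + 2 * δ) := by
    rw [Nat.card_congr htype.some.toEquiv]
    simp [Nat.card_eq_fintype_card, pow_add, pow_mul]
  have hcard2 : Nat.card C ≤ 2 ^ (α + 2 * β - (d - 1)) := by
    have := Nat.card_le_card_of_injective _ hinj
    calc Nat.card C ≤ Nat.card ({x : ι // x ∈ Dᶜ} → ZMod 2) := this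
      _ = 2 ^ (α + 2 * β - (d - 1)) := by
          rw [Nat.card_eq_fintype_card, Fintype.card_fun, ZMod.card,
            Fintype.card_coe, Finset.card_compl, hDcard, hn]
  have hexp : γ + 2 * δ ≤ α + 2 * β - (d - 1) := by
    rw [hcard1] at hcard2
    exact (Nat.pow_le_pow_iff_right (le_refl 2)).mp hcard2
  have hfinal : γ + 2 * δ + (d - 1) ≤ α + 2 * β := by omega
  have hq : ((γ + 2 * δ + (d - 1) : ℕ) : ℚ) ≤ ((α + 2 * β : ℕ) : ℚ) :=
    Nat.cast_le.mpr hfinal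
  push_cast [Nat.cast_sub hd1] at hq
  linarith
end

section
/- Let α ≥ 2 and β ≥ 1 odd, and let C ⊆ Z_2^α × Z_4^β be the Z_2Z_4-additive cyclic code generated by (x-1 | 0) and (1 | 1+2), i.e., b = x-1, ℓ = 1, f = h = 1, g = (x^β-1). Then the Gray image φ(C) ⊆ Z_2^{α+2β} is exactly the set of all even-weight binary vectors of length α+2β, and hence C meets the Singleton-type bound (d-1)/2 ≤ α/2 + β - γ/2 - δ with equality (d = 2). -/
open Polynomial

/-- Hamming weight of a binary vector of length `α + 2β`. -/
noncomputable def wt {α β : ℕ} (w : (Fin α ⊕ Fin β ⊕ Fin β) → ZMod 2) : ℕ :=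
  (Finset.univ.filter fun i => w i ≠ 0).card

/-! ### Auxiliary material -/

def s2 : ZMod 4 →+* ZMod 2 := ZMod.castHom (show 2 ∣ 4 by norm_num) (ZMod 2)

def phi4inv (p : ZMod 2 × ZMod 2) : ZMod 4 :=
  if p = (0,0) then 0 else if p = (0,1) then 1 else if p = (1,1) then 2 else 3

lemma phi4_phi4inv : ∀ p : ZMod 2 × ZMod 2, phi4 (phi4inv p) = p := by decide

lemma eval_polyOf2 {α : ℕ} (u : Fin α → ZMod 2) : (polyOf2 u).eval 1 = ∑ i, u i := by
  simp [polyOf2, eval_finset_sum]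

lemma eval_polyOf4 {β : ℕ} (u : Fin β → ZMod 4) : (polyOf4 u).eval 1 = ∑ j, u j := by
  simp [polyOf4, eval_finset_sum]

lemma eval_red42 (p : Polynomial (ZMod 4)) : (red42 p).eval 1 = s2 (p.eval 1) := by
  simpa [red42, s2] using
    Polynomial.eval_one_map (ZMod.castHom (show 2 ∣ 4 by norm_num) (ZMod 2)) p

lemma phi4_sum (x : ZMod 4) : (phi4 x).1 + (phi4 x).2 = s2 x := by
  revert x; decide

lemma even_wt_iff {α β : ℕ} (w : (Fin α ⊕ Fin β ⊕ Fin β) → ZMod 2) :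
    Even (wt w) ↔ ∑ i, w i = 0 := by
  have h1 : ∑ i, w i = ((Finset.univ.filter fun i => w i ≠ 0).card : ZMod 2) := by
    rw [← Finset.sum_filter_ne_zero]
    rw [Finset.card_eq_sum_ones, Nat.cast_sum]
    apply Finset.sum_congr rfl
    intro i hi
    have hne : w i ≠ 0 := (Finset.mem_filter.mp hi).2
    revert hne; generalize w i = x; revert x; decide
  rw [h1]
  unfold wt
  rw [ZMod.natCast_eq_zero_iff]
  exact even_iff_two_dvd

lemma sum_gray {α β : ℕ} (z : (Fin α → ZMod 2) × (Fin β → ZMod 4)) :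
    ∑ i, grayMap z i = (∑ i, z.1 i) + s2 (∑ j, z.2 j) := by
  rw [Fintype.sum_sum_type, Fintype.sum_sum_type, map_sum, ← Finset.sum_add_distrib]
  congr 1
  exact Finset.sum_congr rfl fun j _ => phi4_sum (z.2 j)

lemma memC_iff {α β : ℕ} (z : (Fin α → ZMod 2) × (Fin β → ZMod 4)) :
    memC (α := α) (β := β) (X - 1) 1 (1 + 2) z ↔ (∑ i, z.1 i) + s2 (∑ j, z.2 j) = 0 := by
  constructor
  · rintro ⟨lam, mu, ⟨c1, hc1⟩, ⟨c2, hc2⟩⟩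
    have e1 : (polyOf2 z.1).eval 1 = s2 (mu.eval 1) := by
      have := congrArg (Polynomial.eval 1) hc1
      simp [eval_red42] at this
      linear_combination this
    have e2 : (polyOf4 z.2).eval 1 = mu.eval 1 * 3 := by
      have := congrArg (Polynomial.eval 1) hc2
      simp at this
      linear_combination this
    rw [eval_polyOf2] at e1
    rw [eval_polyOf4] at e2
    rw [e1, e2, map_mul]
    have h3 : s2 3 = 1 := by decide
    rw [h3, mul_one]
    generalize s2 (Polynomial.eval 1 mu) = x
    revert x; decide
  · intro h
    set mu : Polynomial (ZMod 4) := 3 * polyOf4 z.2 with hmu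
    have h8 : (8 : Polynomial (ZMod 4)) = 0 := by
      rw [← map_ofNat Polynomial.C 8, show (8 : ZMod 4) = 0 by decide, map_zero]
    have hq : polyOf4 z.2 - mu * (1 + 2) = 0 := by
      rw [hmu]; ring_nf; rw [h8]; ring
    have hroot : (X - C (1 : ZMod 2)) ∣ (polyOf2 z.1 - red42 mu) := by
      rw [Polynomial.dvd_iff_isRoot]
      unfold Polynomial.IsRoot
      rw [Polynomial.eval_sub, eval_red42, eval_polyOf2, hmu, Polynomial.eval_mul]
      simp only [Polynomial.eval_ofNat]
      rw [eval_polyOf4, map_mul]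
      have h3 : s2 3 = 1 := by decide
      rw [h3, one_mul, sub_eq_zero]
      have hb : s2 (∑ j, z.2 j) + s2 (∑ j, z.2 j) = 0 := by
        generalize s2 (∑ j, z.2 j) = x; revert x; decide
      linear_combination h - hb
    obtain ⟨p, hp⟩ := hroot
    have hsurj : Function.Surjective (ZMod.castHom (show 2 ∣ 4 by norm_num) (ZMod 2)) := by
      decide
    obtain ⟨lam, hlam⟩ := Polynomial.map_surjective _ hsurj p
    have hl2 : red42 lam = p := by simpa [red42] using hlam
    refine ⟨lam, mu, ⟨0, ?_⟩, ⟨0, by rw [hq, mul_zero]⟩⟩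
    rw [mul_zero, mul_one, hl2]
    rw [Polynomial.C_1] at hp
    linear_combination hp

/-- For `α ≥ 2` and `β ≥ 1` odd, the Gray image of the MDSS code
`C = ⟨(x-1|0), (1|1+2)⟩` is exactly the set of all even-weight binary
vectors of length `α+2β`; hence its minimum distance is `d = 2`, meeting
the Singleton-type bound `(d-1)/2 ≤ α/2 + β - γ/2 - δ` with equality
(here `γ = α-1`, `δ = β`). -/
theorem gray_image_even_weight_code (α β : ℕ) (hα : 2 ≤ α) (hβ : Odd β) (hβ1 : 1 ≤ β) :
    (∀ w : (Fin α ⊕ Fin β ⊕ Fin β) → ZMod 2,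
      (∃ z : (Fin α → ZMod 2) × (Fin β → ZMod 4),
        memC (X - 1) 1 (1 + 2) z ∧ grayMap z = w) ↔ Even (wt w)) ∧
    IsLeast {n : ℕ | ∃ z : (Fin α → ZMod 2) × (Fin β → ZMod 4),
        memC (X - 1) 1 (1 + 2) z ∧ grayMap z ≠ 0 ∧ n = wt (grayMap z)} 2 ∧
    ((2 : ℚ) - 1) / 2 = (α : ℚ) / 2 + β - ((α : ℚ) - 1) / 2 - β := by
  have hiff : ∀ w : (Fin α ⊕ Fin β ⊕ Fin β) → ZMod 2,
      (∃ z : (Fin α → ZMod 2) × (Fin β → ZMod 4),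
        memC (X - 1) 1 (1 + 2) z ∧ grayMap z = w) ↔ Even (wt w) := by
    intro w
    constructor
    · rintro ⟨z, hz, rfl⟩
      rw [even_wt_iff, sum_gray]
      exact (memC_iff z).mp hz
    · intro hw
      rw [even_wt_iff w] at hw
      set z : (Fin α → ZMod 2) × (Fin β → ZMod 4) :=
        (fun i => w (Sum.inl i),
         fun j => phi4inv (w (Sum.inr (Sum.inl j)), w (Sum.inr (Sum.inr j)))) with hz
      have hgray : grayMap z = w := by
        funext i
        rcases i with i | j | j
        · rfl
        · simp [grayMap, hz, phi4_phi4inv]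
        · simp [grayMap, hz, phi4_phi4inv]
      refine ⟨z, ?_, hgray⟩
      rw [memC_iff, ← sum_gray, hgray]
      exact hw
  refine ⟨hiff, ⟨?_, ?_⟩, by ring⟩
  · -- 2 is attained
    have h0 : (0 : ℕ) < α := by omega
    have h1 : (1 : ℕ) < α := by omega
    set i0 : Fin α := ⟨0, h0⟩
    set i1 : Fin α := ⟨1, h1⟩
    have hne01 : i0 ≠ i1 := by simp [i0, i1, Fin.ext_iff]
    set z : (Fin α → ZMod 2) × (Fin β → ZMod 4) :=
      (Pi.single i0 1 + Pi.single i1 1, 0) with hzdef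
    have hval : ∀ i, z.1 i = (if i = i0 then 1 else 0) + (if i = i1 then 1 else 0) := by
      intro i
      simp [hzdef, Pi.single_apply]
    refine ⟨z, ?_, ?_, ?_⟩
    · rw [memC_iff]
      have : ∑ i, z.1 i = 0 := by
        calc ∑ i, z.1 i
            = ∑ i, ((if i = i0 then (1 : ZMod 2) else 0) + (if i = i1 then 1 else 0)) :=
              Finset.sum_congr rfl fun i _ => hval i
          _ = 0 := by
              rw [Finset.sum_add_distrib, Finset.sum_ite_eq', Finset.sum_ite_eq']
              simp only [Finset.mem_univ, if_true]
              decide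
      rw [this]
      simp [hzdef]
    · intro hcon
      have := congrFun hcon (Sum.inl i0)
      rw [show grayMap z (Sum.inl i0) = z.1 i0 from rfl, hval i0] at this
      simp [hne01] at this
    · -- 2 = wt (grayMap z)
      have hset : (Finset.univ.filter fun i => grayMap z i ≠ 0)
          = {Sum.inl i0, Sum.inl i1} := by
        ext i
        simp only [Finset.mem_filter, Finset.mem_univ, true_and, Finset.mem_insert,
          Finset.mem_singleton]
        rcases i with i | j | j
        · rw [show grayMap z (Sum.inl i) = z.1 i from rfl, hval i]
          simp only [Sum.inl.injEq]
          by_cases h0' : i = i0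
          · subst h0'
            rw [if_pos rfl, if_neg hne01]
            simpa using (by decide : (1 : ZMod 2) + 0 ≠ 0)
          · by_cases h1' : i = i1
            · subst h1'
              rw [if_neg fun hc => hne01 hc.symm, if_pos rfl]
              simpa using (by decide : (0 : ZMod 2) + 1 ≠ 0)
            · rw [if_neg h0', if_neg h1']
              simp [h0', h1']
        · rw [show grayMap z (Sum.inr (Sum.inl j)) = (phi4 (z.2 j)).1 from rfl]
          simp [hzdef, phi4]
        · rw [show grayMap z (Sum.inr (Sum.inr j)) = (phi4 (z.2 j)).2 from rfl]
          simp [hzdef, phi4]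
      rw [wt, hset, Finset.card_insert_of_notMem (by simp [hne01]), Finset.card_singleton]
  · -- lower bound
    rintro n ⟨z, hz, hne, rfl⟩
    have heven : Even (wt (grayMap z)) := by
      rw [even_wt_iff, sum_gray]
      exact (memC_iff z).mp hz
    have hpos : 0 < wt (grayMap z) := by
      obtain ⟨i, hi⟩ := Function.ne_iff.mp hne
      simp only [Pi.zero_apply] at hi
      exact Finset.card_pos.mpr ⟨i, Finset.mem_filter.mpr ⟨Finset.mem_univ i, hi⟩⟩
    obtain ⟨k, hk⟩ := heven
    omega
end
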